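/- arXiv:1302.3077 — 5 statements merged into one kernel-verified Lean document; each statement's English description precedes it below -/
import Mathlib

section
/- Assume the bound conditions: D_min < μ(s) for all s ∈ [s_min, s_in], D_max > μ(s) for all s ∈ [0, s_in], and (s̄, D̄) ∈ [s_min, s_in) × [D_min, D_max]; assume the gain condition G1 > max( max_{s∈[0,s_in]}(−μ'(s)), (D̄ − μ(s_in))/(s_in − s̄) ). Then there exists a unique s_eq ∈ [0, s_in) satisfying μ(s_eq) = sat_{[D_min,D_max]}(D̄ − G1(s_eq − s̄)), and the point (s_eq, s_in − s_eq) is an equilibrium of the closed-loop chemostat, i.e. the right-hand side of the chemostat ODE with input u = sat_{[D_min,D_max]}(D̄ − G1(s − s̄)) vanishes at (s_eq, s_in − s_eq), with s_in − s_eq > 0. -/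
/-- Saturation function `sat_{[Dmin,Dmax]}`. -/
noncomputable def sat (Dmin Dmax ξ : ℝ) : ℝ :=
  if ξ > Dmax then Dmax else if ξ < Dmin then Dmin else ξ

/-- Existence and uniqueness of the equilibrium of the closed-loop chemostat
with saturated proportional feedback (Proposition 1, equilibrium part). -/
theorem stmt_0
    (μ : ℝ → ℝ) (s_in s_min Dmin Dmax sbar Dbar G1 : ℝ)
    (hμ : ContDiff ℝ 1 μ) (hμ0 : μ 0 = 0)
    (hμpos : ∀ s ∈ Set.Ioc 0 s_in, 0 < μ s)
    (hsin : 0 < s_in)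
    (hDmin : 0 ≤ Dmin) (hDD : Dmin < Dmax)
    (hsmin : 0 ≤ s_min) (hsminlt : s_min < s_in)
    (hlow : ∀ s ∈ Set.Icc s_min s_in, Dmin < μ s)
    (hup : ∀ s ∈ Set.Icc 0 s_in, μ s < Dmax)
    (hsbar : sbar ∈ Set.Ico s_min s_in)
    (hDbar : Dbar ∈ Set.Icc Dmin Dmax)
    (hG1 : 0 < G1)
    (hgain1 : ∀ s ∈ Set.Icc 0 s_in, -deriv μ s < G1)
    (hgain2 : (Dbar - μ s_in) / (s_in - sbar) < G1) :
    ∃! s_eq : ℝ, s_eq ∈ Set.Ico 0 s_in ∧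
      μ s_eq = sat Dmin Dmax (Dbar - G1 * (s_eq - sbar)) ∧
      (-(μ s_eq) * (s_in - s_eq)
          + sat Dmin Dmax (Dbar - G1 * (s_eq - sbar)) * (s_in - s_eq) = 0 ∧
       μ s_eq * (s_in - s_eq)
          - sat Dmin Dmax (Dbar - G1 * (s_eq - sbar)) * (s_in - s_eq) = 0 ∧
       0 < s_in - s_eq) := by
  obtain ⟨hsbar1, hsbar2⟩ := hsbar
  obtain ⟨hDbar1, hDbar2⟩ := hDbar
  have hdiff : Differentiable ℝ μ := hμ.differentiable one_ne_zero
  set h : ℝ → ℝ := fun s => μ s + G1 * (s - sbar) - Dbar with hh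
  have hderiv : ∀ x : ℝ, deriv h x = deriv μ x + G1 := by
    intro x
    have h1 : HasDerivAt h (deriv μ x + G1 * 1) x := by
      exact (((hdiff x).hasDerivAt).add
        (((hasDerivAt_id x).sub_const sbar).const_mul G1)).sub_const Dbar
    simpa using h1.deriv
  have hcont : ContinuousOn h (Set.Icc 0 s_in) :=
    (hdiff.continuous.add (continuous_const.mul (continuous_id.sub continuous_const))).sub
      continuous_const |>.continuousOn
  have hmono : StrictMonoOn h (Set.Icc 0 s_in) := by
    apply strictMonoOn_of_deriv_pos (convex_Icc _ _) hcont
    intro x hx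
    rw [interior_Icc] at hx
    have := hgain1 x ⟨le_of_lt hx.1, le_of_lt hx.2⟩
    rw [hderiv]; linarith
  have hh0 : h 0 ≤ 0 := by
    simp only [hh, hμ0]
    nlinarith [mul_nonneg (le_of_lt hG1) (le_trans hsmin hsbar1)]
  have hhsin : 0 < h s_in := by
    have hpos : 0 < s_in - sbar := by linarith
    have := (div_lt_iff₀ hpos).mp hgain2
    simp only [hh]; nlinarith
  -- key equivalence
  have key : ∀ y ∈ Set.Ico 0 s_in,
      (μ y = sat Dmin Dmax (Dbar - G1 * (y - sbar)) ↔ h y = 0) := by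
    intro y hy
    constructor
    · intro heq
      unfold sat at heq
      split_ifs at heq with h1 h2
      · exact absurd heq (ne_of_lt (hup y ⟨hy.1, le_of_lt hy.2⟩))
      · -- ξ < Dmin, μ y = Dmin
        have hysbar : sbar < y := by nlinarith
        have := hlow y ⟨le_trans hsbar1 (le_of_lt hysbar), le_of_lt hy.2⟩
        linarith
      · simp only [hh]; linarith
    · intro heq
      have hξ : Dbar - G1 * (y - sbar) = μ y := by simp only [hh] at heq; linarith
      have hlt : Dbar - G1 * (y - sbar) < Dmax := by
        rw [hξ]; exact hup y ⟨hy.1, le_of_lt hy.2⟩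
      have hge : Dmin < Dbar - G1 * (y - sbar) := by
        rcases le_or_gt s_min y with hc | hc
        · rw [hξ]; exact hlow y ⟨hc, le_of_lt hy.2⟩
        · nlinarith
      unfold sat
      rw [if_neg (not_lt.mpr (le_of_lt hlt)), if_neg (not_lt.mpr (le_of_lt hge)), hξ]
  -- existence of root of h
  have hmem : (0:ℝ) ∈ Set.Icc (h 0) (h s_in) := ⟨hh0, le_of_lt hhsin⟩
  obtain ⟨s_eq, hseq_mem, hseq⟩ := intermediate_value_Icc (le_of_lt hsin) hcont hmem
  have hne : s_eq ≠ s_in := by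
    intro hcontra; rw [hcontra] at hseq; linarith
  have hseq_mem' : s_eq ∈ Set.Ico 0 s_in := ⟨hseq_mem.1, lt_of_le_of_ne hseq_mem.2 hne⟩
  refine ⟨s_eq, ⟨hseq_mem', ?_, ?_⟩, ?_⟩
  · exact (key s_eq hseq_mem').mpr hseq
  · have heq := (key s_eq hseq_mem').mpr hseq
    refine ⟨by rw [← heq]; ring, by rw [← heq]; ring, by linarith [hseq_mem'.2]⟩
  · rintro y ⟨hy_mem, hy_eq, -⟩
    have hy0 : h y = 0 := (key y hy_mem).mp hy_eq
    exact hmono.injOn ⟨hy_mem.1, le_of_lt hy_mem.2⟩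
      ⟨hseq_mem'.1, le_of_lt hseq_mem'.2⟩ (by rw [hy0, hseq])
end

section
/- Assume the bound conditions: D_min < μ(s) for all s ∈ [s_min, s_in], D_max > μ(s) for all s ∈ [0, s_in], and (s̄, D̄) ∈ [s_min, s_in) × [D_min, D_max]; assume the gain condition G1 > max( max_{s∈[0,s_in]}(−μ'(s)), (D̄ − μ(s_in))/(s_in − s̄) ). Let (s_eq, s_in − s_eq) with s_eq ∈ [0, s_in) be the equilibrium of the closed-loop chemostat with feedback u = sat_{[D_min,D_max]}(D̄ − G1(s − s̄)). Then for every solution t ↦ (s(t), b(t)) of the closed-loop chemostat defined on [0, ∞) with initial condition s(0) ∈ [0, s_in) and b(0) > 0, one has (s(t), b(t)) → (s_eq, s_in − s_eq) as t → ∞. -/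
open Set Filter Topology intervalIntegral

lemma sat_ge (Dmin Dmax ξ : ℝ) (h : Dmin ≤ Dmax) : Dmin ≤ sat Dmin Dmax ξ := by
  unfold sat; split_ifs <;> linarith

lemma sat_le (Dmin Dmax ξ : ℝ) (h : Dmin ≤ Dmax) : sat Dmin Dmax ξ ≤ Dmax := by
  unfold sat; split_ifs <;> linarith

lemma sat_anti (Dmin Dmax : ℝ) (h : Dmin ≤ Dmax) {a c : ℝ} (hac : a ≤ c) :
    sat Dmin Dmax a ≤ sat Dmin Dmax c := by
  unfold sat; split_ifs <;> linarith

lemma sat_sub_ge (Dmin Dmax : ℝ) (h : Dmin ≤ Dmax) {a d : ℝ} (hd : 0 ≤ d) :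
    sat Dmin Dmax a - d ≤ sat Dmin Dmax (a - d) := by
  unfold sat; split_ifs <;> linarith

lemma sat_eq_clamp (Dmin Dmax ξ : ℝ) (h : Dmin ≤ Dmax) :
    sat Dmin Dmax ξ = max Dmin (min Dmax ξ) := by
  unfold sat; split_ifs with h1 h2
  · rw [min_eq_left (le_of_lt h1), max_eq_right h]
  · rw [min_eq_right (by linarith), max_eq_left (le_of_lt h2)]
  · rw [min_eq_right (by linarith), max_eq_right (by linarith)]

lemma sat_cont (Dmin Dmax : ℝ) (h : Dmin ≤ Dmax) :
    Continuous (fun ξ => sat Dmin Dmax ξ) := by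
  have : (fun ξ => sat Dmin Dmax ξ) = fun ξ => max Dmin (min Dmax ξ) := by
    funext ξ; exact sat_eq_clamp _ _ _ h
  rw [this]
  exact continuous_const.max (continuous_const.min continuous_id)

open Set Filter Topology

/-- If `f T < c` and whenever `f t = c` (for `t ≥ T`) the derivative is negative,
then `f` stays below `c` on `[T, ∞)`. -/
lemma barrier_lt (f : ℝ → ℝ) (T c : ℝ)
    (hcont : ∀ t ≥ T, ContinuousAt f t)
    (hder : ∀ t ≥ T, f t = c → ∃ d, d < 0 ∧ HasDerivAt f d t)
    (h0 : f T < c) : ∀ t ≥ T, f t < c := by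
  by_contra hcon
  push_neg at hcon
  obtain ⟨t₁, ht₁, hft₁⟩ := hcon
  set A : Set ℝ := {t | t ∈ Icc T t₁ ∧ c ≤ f t} with hA
  have hTt₁ : T ≤ t₁ := ht₁
  have hAne : A.Nonempty := ⟨t₁, ⟨⟨hTt₁, le_rfl⟩, hft₁⟩⟩
  have hAbdd : BddBelow A := ⟨T, fun x hx => hx.1.1⟩
  have hAclosed : IsClosed A := by
    apply IsSeqClosed.isClosed
    intro x p hx hp
    have hxIcc : ∀ n, x n ∈ Icc T t₁ := fun n => (hx n).1
    have hpIcc : p ∈ Icc T t₁ := by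
      constructor
      · exact le_of_tendsto_of_tendsto' tendsto_const_nhds hp (fun n => (hxIcc n).1)
      · exact le_of_tendsto_of_tendsto' hp tendsto_const_nhds (fun n => (hxIcc n).2)
    refine ⟨hpIcc, ?_⟩
    have hfc : Filter.Tendsto (fun n => f (x n)) atTop (nhds (f p)) :=
      ((hcont p hpIcc.1).tendsto).comp hp
    exact le_of_tendsto_of_tendsto' tendsto_const_nhds hfc (fun n => (hx n).2)
  set t₂ := sInf A with ht₂
  have ht₂A : t₂ ∈ A := hAclosed.csInf_mem hAne hAbdd
  have ht₂T : T ≤ t₂ := ht₂A.1.1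
  have ht₂T' : T < t₂ := by
    rcases eq_or_lt_of_le ht₂T with h | h
    · exfalso; rw [← h] at ht₂A; linarith [ht₂A.2]
    · exact h
  have hbefore : ∀ t, T ≤ t → t < t₂ → f t < c := by
    intro t hTt htt₂
    by_contra hcf
    push_neg at hcf
    have : t ∈ A := ⟨⟨hTt, le_trans (le_of_lt htt₂) ht₂A.1.2⟩, hcf⟩
    exact absurd (csInf_le hAbdd this) (not_le.mpr htt₂)
  have hft₂le : f t₂ ≤ c := by
    have hev : ∀ᶠ t in 𝓝[<] t₂, f t < c := by
      filter_upwards [Ioo_mem_nhdsLT_of_mem (show t₂ ∈ Ioc T t₂ from ⟨ht₂T', le_rfl⟩)]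
        with t ht
      exact hbefore t (le_of_lt ht.1) ht.2
    have hlim : Filter.Tendsto f (𝓝[<] t₂) (nhds (f t₂)) :=
      ((hcont t₂ ht₂T).tendsto).mono_left nhdsWithin_le_nhds
    exact le_of_tendsto hlim (hev.mono fun t ht => le_of_lt ht)
  have hft₂ : f t₂ = c := le_antisymm hft₂le ht₂A.2
  obtain ⟨d, hd, hdd⟩ := hder t₂ ht₂T hft₂
  have hslope := hasDerivAt_iff_tendsto_slope.mp hdd
  have hslope' : Filter.Tendsto (slope f t₂) (𝓝[<] t₂) (nhds d) :=
    hslope.mono_left (nhdsWithin_mono _ (fun x hx => ne_of_lt hx))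
  have hev2 : ∀ᶠ t in 𝓝[<] t₂, slope f t₂ t < 0 :=
    hslope' (Iio_mem_nhds hd)
  have hev3 : ∀ᶠ t in 𝓝[<] t₂, t ∈ Ioo T t₂ :=
    Ioo_mem_nhdsLT_of_mem ⟨ht₂T', le_rfl⟩
  have : ∃ t, slope f t₂ t < 0 ∧ t ∈ Ioo T t₂ := by
    rcases (hev2.and hev3).exists with ⟨t, ht⟩
    exact ⟨t, ht⟩
  obtain ⟨t, hts, htmem⟩ := this
  have hft : f t < c := hbefore t (le_of_lt htmem.1) htmem.2
  have : 0 < slope f t₂ t := by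
    rw [slope_def_field]
    rw [div_pos_iff]
    right
    constructor <;> [skip; linarith [htmem.2]]
    rw [hft₂]; linarith
  linarith

/-- Non-strict version. -/
lemma barrier_le (f : ℝ → ℝ) (T c : ℝ)
    (hcont : ∀ t ≥ T, ContinuousAt f t)
    (hder : ∀ t ≥ T, f t = c → ∃ d, d < 0 ∧ HasDerivAt f d t)
    (h0 : f T ≤ c) : ∀ t ≥ T, f t ≤ c := by
  by_contra hcon
  push_neg at hcon
  obtain ⟨t₁, ht₁, hft₁⟩ := hcon
  rcases eq_or_lt_of_le h0 with hTc | hTc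
  · -- f T = c, derivative negative at T pushes below
    obtain ⟨d, hd, hdd⟩ := hder T le_rfl hTc
    have hT₁ : T < t₁ := by
      rcases eq_or_lt_of_le ht₁ with h | h
      · exfalso; rw [← h] at hft₁; linarith
      · exact h
    have hslope := hasDerivAt_iff_tendsto_slope.mp hdd
    have hslope' : Filter.Tendsto (slope f T) (𝓝[>] T) (nhds d) :=
      hslope.mono_left (nhdsWithin_mono _ (fun x hx => ne_of_gt hx))
    have hev2 : ∀ᶠ t in 𝓝[>] T, slope f T t < 0 := hslope' (Iio_mem_nhds hd)
    have hev3 : ∀ᶠ t in 𝓝[>] T, t ∈ Ioo T t₁ := Ioo_mem_nhdsGT_of_mem ⟨le_rfl, hT₁⟩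
    obtain ⟨T', hT's, hT'mem⟩ := (hev2.and hev3).exists
    have hfT' : f T' < c := by
      rw [slope_def_field] at hT's
      rw [div_neg_iff] at hT's
      rcases hT's with ⟨h1, h2⟩ | ⟨h1, h2⟩
      · linarith [hT'mem.1]
      · rw [hTc] at h1; linarith
    have := barrier_lt f T' c (fun t ht => hcont t (le_trans (le_of_lt hT'mem.1) ht))
      (fun t ht h => hder t (le_trans (le_of_lt hT'mem.1) ht) h) hfT' t₁ (le_of_lt hT'mem.2)
    linarith
  · have := barrier_lt f T c hcont hder hTc t₁ ht₁
    linarith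

open Set Filter Topology intervalIntegral

/-- Solution formula for the scalar linear ODE `y' = c t * y` on `[0,∞)`. -/
lemma ode_exp (c y : ℝ → ℝ) (hc : Continuous c)
    (hy : ∀ t ≥ (0:ℝ), HasDerivAt y (c t * y t) t) :
    ∀ t ≥ (0:ℝ), y t = y 0 * Real.exp (∫ τ in (0:ℝ)..t, c τ) := by
  intro T hT
  set C : ℝ → ℝ := fun t => ∫ τ in (0:ℝ)..t, c τ with hC
  have hCd : ∀ t : ℝ, HasDerivAt C (c t) t := by
    intro t
    exact integral_hasDerivAt_right (hc.intervalIntegrable _ _)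
      (hc.stronglyMeasurableAtFilter _ _) hc.continuousAt
  set g : ℝ → ℝ := fun t => y t * Real.exp (-(C t)) with hg
  have hgd : ∀ t ≥ (0:ℝ), HasDerivAt g 0 t := by
    intro t ht
    have h1 : HasDerivAt (fun u => Real.exp (-(C u))) (Real.exp (-(C t)) * (-(c t))) t :=
      ((hCd t).neg).exp
    have := (hy t ht).mul h1
    refine this.congr_deriv ?_
    ring
  have hconst : g T = g 0 := by
    have := constant_of_has_deriv_right_zero (f := g) (a := 0) (b := T)
      (fun t ht => ((hy t ht.1).mul (((hCd t).neg).exp)).continuousAt.continuousWithinAt.congr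
        (fun x _ => rfl) rfl)
      (fun t ht => (hgd t ht.1).hasDerivWithinAt)
    exact this T ⟨hT, le_rfl⟩
  have hC0 : C 0 = 0 := integral_same
  have : y T * Real.exp (-(C T)) = y 0 := by
    have := hconst
    simp only [hg, hC0, neg_zero, Real.exp_zero, mul_one] at this
    exact this
  have hpos : Real.exp (-(C T)) ≠ 0 := (Real.exp_pos _).ne'
  field_simp [Real.exp_ne_zero] at this ⊢
  rw [← this]
  rw [mul_assoc, ← Real.exp_add]
  simp [hC]

/-- Shifted version. -/
lemma ode_exp_shift (c y : ℝ → ℝ) (hc : Continuous c)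
    (hy : ∀ t ≥ (0:ℝ), HasDerivAt y (c t * y t) t)
    {t₀ t : ℝ} (h0 : 0 ≤ t₀) (ht : t₀ ≤ t) :
    y t = y t₀ * Real.exp (∫ τ in t₀..t, c τ) := by
  rw [ode_exp c y hc hy t (le_trans h0 ht), ode_exp c y hc hy t₀ h0]
  rw [mul_assoc, ← Real.exp_add]
  rw [integral_add_adjacent_intervals (hc.intervalIntegrable _ _) (hc.intervalIntegrable _ _)]

open Set Filter Topology

lemma cont_comp_max {s : ℝ → ℝ} (h : ∀ t ≥ (0:ℝ), ContinuousAt s t) :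
    Continuous (fun t => s (max t 0)) := by
  rw [continuous_iff_continuousAt]
  intro t
  rcases lt_trichotomy t 0 with ht | rfl | ht
  · have hev : (fun u => s (max u 0)) =ᶠ[𝓝 t] (fun _ => s 0) := by
      filter_upwards [Iio_mem_nhds ht] with u hu
      rw [max_eq_right (le_of_lt hu)]
    exact ContinuousAt.congr continuousAt_const hev.symm
  · have hmax : Continuous (fun u : ℝ => max u 0) := continuous_id.max continuous_const
    have h2 : Tendsto (fun u : ℝ => max u 0) (𝓝 0) (𝓝 0) := by
      simpa [ContinuousAt] using hmax.continuousAt (x := 0)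
    have h3 : Tendsto (fun u : ℝ => s (max u 0)) (𝓝 0) (𝓝 (s 0)) :=
      Filter.Tendsto.comp (h 0 le_rfl) h2
    have : ContinuousAt (fun u : ℝ => s (max u 0)) 0 := by
      unfold ContinuousAt
      simpa using h3
    exact this
  · have hev : (fun u => s (max u 0)) =ᶠ[𝓝 t] s := by
      filter_upwards [Ioi_mem_nhds ht] with u hu
      rw [max_eq_left (le_of_lt hu)]
    exact ContinuousAt.congr (h t (le_of_lt ht)) hev.symm

lemma sign_lemma
    (μ : ℝ → ℝ) (s_in s_min Dmin Dmax sbar Dbar G1 s_eq : ℝ)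
    (hμ : ContDiff ℝ 1 μ)
    (hlow : ∀ x ∈ Set.Icc s_min s_in, Dmin < μ x)
    (hup : ∀ x ∈ Set.Icc 0 s_in, μ x < Dmax)
    (hsbar : sbar ∈ Set.Ico s_min s_in)
    (hDbar : Dbar ∈ Set.Icc Dmin Dmax)
    (hG1 : 0 < G1)
    (hgain1 : ∀ x ∈ Set.Icc 0 s_in, -deriv μ x < G1)
    (hseq_mem : s_eq ∈ Set.Ico 0 s_in)
    (hseq : μ s_eq = sat Dmin Dmax (Dbar - G1 * (s_eq - sbar))) :
    ∀ x ∈ Set.Icc 0 s_in,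
      (x < s_eq → μ x < sat Dmin Dmax (Dbar - G1 * (x - sbar))) ∧
      (s_eq < x → sat Dmin Dmax (Dbar - G1 * (x - sbar)) < μ x) := by
  have hψ : StrictMonoOn (fun x => μ x + G1 * x) (Icc 0 s_in) := by
    apply strictMonoOn_of_deriv_pos (convex_Icc _ _)
    · exact (hμ.continuous.add (continuous_const.mul continuous_id)).continuousOn
    · intro x hx
      rw [interior_Icc] at hx
      have h1 : HasDerivAt μ (deriv μ x) x := (hμ.differentiable one_ne_zero x).hasDerivAt
      have h2 : HasDerivAt (fun y : ℝ => G1 * y) G1 x := by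
        simpa using (hasDerivAt_id x).const_mul G1
      have hd : deriv (fun x => μ x + G1 * x) x = deriv μ x + G1 := (h1.add h2).deriv
      rw [hd]
      have := hgain1 x ⟨le_of_lt hx.1, le_of_lt hx.2⟩
      linarith
  have hseq_in : s_eq ∈ Icc 0 s_in := ⟨hseq_mem.1, le_of_lt hseq_mem.2⟩
  have h1 : ¬ (Dbar - G1 * (s_eq - sbar) > Dmax) := by
    intro h
    unfold sat at hseq
    rw [if_pos h] at hseq
    have := hup s_eq hseq_in
    linarith
  have h2 : ¬ (Dbar - G1 * (s_eq - sbar) < Dmin) := by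
    intro h
    unfold sat at hseq
    rw [if_neg h1, if_pos h] at hseq
    have hgt : sbar < s_eq := by nlinarith [hDbar.1]
    have := hlow s_eq ⟨le_trans hsbar.1 (le_of_lt hgt), hseq_in.2⟩
    linarith
  have hmid : μ s_eq = Dbar - G1 * s_eq + G1 * sbar := by
    unfold sat at hseq
    rw [if_neg h1, if_neg h2] at hseq
    rw [hseq]; ring
  intro x hx
  constructor
  · intro hxlt
    by_cases hb1 : Dbar - G1 * (x - sbar) > Dmax
    · unfold sat
      rw [if_pos hb1]
      exact hup x hx
    · by_cases hb2 : Dbar - G1 * (x - sbar) < Dmin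
      · exfalso
        push_neg at h2
        nlinarith
      · unfold sat
        rw [if_neg hb1, if_neg hb2]
        have hlt := hψ hx hseq_in hxlt
        simp only at hlt
        have hgoal : Dbar - G1 * (x - sbar) = Dbar - G1 * x + G1 * sbar := by ring
        rw [hgoal]
        linarith
  · intro hxgt
    by_cases hb1 : Dbar - G1 * (x - sbar) > Dmax
    · exfalso
      push_neg at h1
      nlinarith
    · by_cases hb2 : Dbar - G1 * (x - sbar) < Dmin
      · unfold sat
        rw [if_neg hb1, if_pos hb2]
        have hgt : sbar < x := by nlinarith [hDbar.1]
        exact hlow x ⟨le_trans hsbar.1 (le_of_lt hgt), hx.2⟩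
      · unfold sat
        rw [if_neg hb1, if_neg hb2]
        have hlt := hψ hseq_in hx hxgt
        simp only at hlt
        have hgoal : Dbar - G1 * (x - sbar) = Dbar - G1 * x + G1 * sbar := by ring
        rw [hgoal]
        linarith

noncomputable def phiC (μ s : ℝ → ℝ) (Dmin Dmax Dbar G1 sbar : ℝ) (τ : ℝ) : ℝ :=
  μ (s (max τ 0)) - sat Dmin Dmax (Dbar - G1 * (s (max τ 0) - sbar))

noncomputable def uC (s : ℝ → ℝ) (Dmin Dmax Dbar G1 sbar : ℝ) (τ : ℝ) : ℝ :=
  sat Dmin Dmax (Dbar - G1 * (s (max τ 0) - sbar))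

set_option maxHeartbeats 1000000

/-- Global attractivity of the closed-loop equilibrium of the chemostat with
saturated proportional feedback (Proposition 1, convergence part). -/
theorem stmt_1
    (μ : ℝ → ℝ) (s_in s_min Dmin Dmax sbar Dbar G1 : ℝ)
    (hμ : ContDiff ℝ 1 μ) (hμ0 : μ 0 = 0)
    (hμpos : ∀ x ∈ Set.Ioc 0 s_in, 0 < μ x)
    (hsin : 0 < s_in)
    (hDmin : 0 ≤ Dmin) (hDD : Dmin < Dmax)
    (hsmin : 0 ≤ s_min) (hsminlt : s_min < s_in)
    (hlow : ∀ x ∈ Set.Icc s_min s_in, Dmin < μ x)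
    (hup : ∀ x ∈ Set.Icc 0 s_in, μ x < Dmax)
    (hsbar : sbar ∈ Set.Ico s_min s_in)
    (hDbar : Dbar ∈ Set.Icc Dmin Dmax)
    (hG1 : 0 < G1)
    (hgain1 : ∀ x ∈ Set.Icc 0 s_in, -deriv μ x < G1)
    (hgain2 : (Dbar - μ s_in) / (s_in - sbar) < G1)
    -- the closed-loop equilibrium
    (s_eq : ℝ) (hseq_mem : s_eq ∈ Set.Ico 0 s_in)
    (hseq : μ s_eq = sat Dmin Dmax (Dbar - G1 * (s_eq - sbar)))
    -- a solution of the closed-loop chemostat on [0,∞)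
    (s b : ℝ → ℝ)
    (hsol : ∀ t ≥ (0:ℝ),
      HasDerivAt s
        (-(μ (s t)) * b t
          + sat Dmin Dmax (Dbar - G1 * (s t - sbar)) * (s_in - s t)) t ∧
      HasDerivAt b
        (μ (s t) * b t - sat Dmin Dmax (Dbar - G1 * (s t - sbar)) * b t) t)
    (hs0 : s 0 ∈ Set.Ico 0 s_in) (hb0 : 0 < b 0) :
    Filter.Tendsto (fun t => (s t, b t)) Filter.atTop
      (nhds (s_eq, s_in - s_eq)) := by
  have hDDle : Dmin ≤ Dmax := hDD.le
  have hseq0 : 0 ≤ s_eq := hseq_mem.1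
  have hseqlt : s_eq < s_in := hseq_mem.2
  have hscont : ∀ t ≥ (0:ℝ), ContinuousAt s t := fun t ht => ((hsol t ht).1).continuousAt
  have hbcont : ∀ t ≥ (0:ℝ), ContinuousAt b t := fun t ht => ((hsol t ht).2).continuousAt
  have hsmaxc : Continuous (fun t => s (max t 0)) := cont_comp_max hscont
  have hsatc : Continuous (fun ξ => sat Dmin Dmax ξ) := sat_cont Dmin Dmax hDDle
  -- U(0) > 0
  have hU0 : (0:ℝ) < sat Dmin Dmax (Dbar - G1 * ((0:ℝ) - sbar)) := by
    by_cases h1 : Dbar - G1 * ((0:ℝ) - sbar) > Dmax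
    · unfold sat
      rw [if_pos h1]
      linarith
    · by_cases h2 : Dbar - G1 * ((0:ℝ) - sbar) < Dmin
      · exfalso
        have hsbar0 : 0 ≤ sbar := le_trans hsmin hsbar.1
        nlinarith [hDbar.1]
      · unfold sat
        rw [if_neg h1, if_neg h2]
        have hsbar0 : 0 ≤ sbar := le_trans hsmin hsbar.1
        rcases lt_or_eq_of_le (by nlinarith [hDbar.1] :
            (0:ℝ) ≤ Dbar - G1 * ((0:ℝ) - sbar)) with h | h
        · exact h
        · exfalso
          have hDbar0 : Dbar = 0 := by nlinarith [hDbar.1, hDmin]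
          have hsbar0' : sbar = 0 := by nlinarith [hDbar.1, hDmin]
          have hsmin0 : s_min = 0 := le_antisymm (by rw [← hsbar0']; exact hsbar.1) hsmin
          have := hlow 0 (by rw [hsmin0]; exact ⟨le_rfl, hsin.le⟩)
          rw [hμ0] at this
          nlinarith [hDbar.1]
  -- s_eq > 0 and μ s_eq > 0
  have hseqpos : 0 < s_eq := by
    rcases lt_or_eq_of_le hseq0 with h | h
    · exact h
    · exfalso
      rw [← h] at hseq
      rw [hμ0] at hseq
      rw [← hseq] at hU0
      exact lt_irrefl _ hU0
  have hmueq : 0 < μ s_eq := hμpos s_eq ⟨hseqpos, hseqlt.le⟩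
  have hsign := sign_lemma μ s_in s_min Dmin Dmax sbar Dbar G1 s_eq hμ hlow hup hsbar hDbar
    hG1 hgain1 hseq_mem hseq
  -- continuity of phiC and uC
  have huCc : Continuous (uC s Dmin Dmax Dbar G1 sbar) := by
    unfold uC
    exact hsatc.comp (continuous_const.sub (continuous_const.mul (hsmaxc.sub continuous_const)))
  have hphiCc : Continuous (phiC μ s Dmin Dmax Dbar G1 sbar) := by
    unfold phiC
    exact (hμ.continuous.comp hsmaxc).sub
      (hsatc.comp (continuous_const.sub (continuous_const.mul (hsmaxc.sub continuous_const))))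
  -- representation of b
  have hbder : ∀ t ≥ (0:ℝ), HasDerivAt b (phiC μ s Dmin Dmax Dbar G1 sbar t * b t) t := by
    intro t ht
    have := (hsol t ht).2
    convert this using 1
    unfold phiC
    rw [max_eq_left ht]
    ring
  have hbrep : ∀ t ≥ (0:ℝ),
      b t = b 0 * Real.exp (∫ τ in (0:ℝ)..t, phiC μ s Dmin Dmax Dbar G1 sbar τ) :=
    ode_exp _ b hphiCc hbder
  have hbpos : ∀ t ≥ (0:ℝ), 0 < b t := by
    intro t ht
    rw [hbrep t ht]
    positivity
  -- invariance of s
  have hsub : ∀ t ≥ (0:ℝ), s t < s_in := by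
    apply barrier_lt s 0 s_in hscont _ hs0.2
    intro t ht hst
    refine ⟨-(μ (s_in)) * b t, ?_, ?_⟩
    · have := hμpos s_in ⟨hsin, le_rfl⟩
      have := hbpos t ht
      nlinarith
    · have := (hsol t ht).1
      rw [hst] at this
      convert this using 1
      ring
  have hslb : ∀ t ≥ (0:ℝ), 0 ≤ s t := by
    have h := barrier_le (fun t => -(s t)) 0 0
      (fun t ht => (hscont t ht).neg) ?_ (by simpa using hs0.1)
    · intro t ht
      have := h t ht
      simpa using this
    · intro t ht hst
      have hst0 : s t = 0 := by linarith [neg_eq_zero.mp hst]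
      refine ⟨-(sat Dmin Dmax (Dbar - G1 * ((0:ℝ) - sbar)) * s_in), ?_, ?_⟩
      · have : 0 < sat Dmin Dmax (Dbar - G1 * ((0:ℝ) - sbar)) * s_in :=
          mul_pos hU0 hsin
        linarith
      · have := ((hsol t ht).1).neg
        rw [hst0] at this
        refine this.congr_deriv ?_
        rw [hμ0]
        ring
  have hsmem : ∀ t ≥ (0:ℝ), s t ∈ Set.Icc 0 s_in :=
    fun t ht => ⟨hslb t ht, (hsub t ht).le⟩
  -- w = s + b - s_in representation
  have hwder : ∀ t ≥ (0:ℝ), HasDerivAt (fun t => s t + b t - s_in)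
      ((fun τ => -(uC s Dmin Dmax Dbar G1 sbar τ)) t * (s t + b t - s_in)) t := by
    intro t ht
    have h1 := ((hsol t ht).1.add (hsol t ht).2).sub_const s_in
    refine h1.congr_deriv ?_
    unfold uC
    have hmax : max t 0 = t := max_eq_left ht
    simp only [hmax]
    ring
  have hwrep : ∀ t ≥ (0:ℝ), s t + b t - s_in
      = (s 0 + b 0 - s_in) * Real.exp (∫ τ in (0:ℝ)..t, -(uC s Dmin Dmax Dbar G1 sbar τ)) := by
    have := ode_exp (fun τ => -(uC s Dmin Dmax Dbar G1 sbar τ))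
      (fun t => s t + b t - s_in) huCc.neg hwder
    simpa using this
  have hintU_nonneg : ∀ t ≥ (0:ℝ), 0 ≤ ∫ τ in (0:ℝ)..t, uC s Dmin Dmax Dbar G1 sbar τ := by
    intro t ht
    apply intervalIntegral.integral_nonneg ht
    intro u _
    unfold uC
    exact le_trans hDmin (sat_ge _ _ _ hDDle)
  have hwabs : ∀ t ≥ (0:ℝ), |s t + b t - s_in| ≤ |s 0 + b 0 - s_in| := by
    intro t ht
    rw [hwrep t ht, abs_mul, Real.abs_exp, intervalIntegral.integral_neg]
    have h1 : Real.exp (-∫ τ in (0:ℝ)..t, uC s Dmin Dmax Dbar G1 sbar τ) ≤ 1 := by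
      rw [Real.exp_le_one_iff]
      linarith [hintU_nonneg t ht]
    nlinarith [abs_nonneg (s 0 + b 0 - s_in)]
  obtain ⟨B, hB⟩ : ∃ B : ℝ, B = s_in + |s 0 + b 0 - s_in| := ⟨_, rfl⟩
  have hBpos : 0 < B := by rw [hB]; positivity
  have hbB : ∀ t ≥ (0:ℝ), b t ≤ B := by
    intro t ht
    have h1 := hwabs t ht
    have h2 := abs_le.mp h1
    have h3 := hslb t ht
    rw [hB]
    linarith [h2.2]
  -- constants for the unbounded-dilution-integral estimate
  obtain ⟨ustar, hustar⟩ : ∃ u : ℝ, u = μ s_eq := ⟨_, rfl⟩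
  obtain ⟨eps', heps'def⟩ : ∃ e : ℝ, e = min (ustar/(2*G1)) ((s_in - s_eq)/2) := ⟨_, rfl⟩
  have hustarpos : 0 < ustar := by rw [hustar]; exact hmueq
  have heps' : 0 < eps' := by
    rw [heps'def]
    apply lt_min
    · positivity
    · linarith
  obtain ⟨x1, hx1def⟩ : ∃ x : ℝ, x = s_eq + eps' := ⟨_, rfl⟩
  have hx1gt : s_eq < x1 := by rw [hx1def]; linarith
  have hx1lt : x1 < s_in := by
    have : eps' ≤ (s_in - s_eq)/2 := by rw [heps'def]; exact min_le_right _ _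
    rw [hx1def]; linarith
  have hx1pos : 0 ≤ x1 := by linarith
  have hUx1 : ustar/2 ≤ sat Dmin Dmax (Dbar - G1 * (x1 - sbar)) := by
    have harg : Dbar - G1 * (x1 - sbar) = (Dbar - G1 * (s_eq - sbar)) - G1 * eps' := by
      rw [hx1def]; ring
    have h1 := sat_sub_ge Dmin Dmax hDDle (a := Dbar - G1 * (s_eq - sbar))
      (d := G1 * eps') (by positivity)
    rw [← harg] at h1
    have h2 : G1 * eps' ≤ ustar / 2 := by
      have h3 : eps' ≤ ustar/(2*G1) := by rw [heps'def]; exact min_le_left _ _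
      have h4 : G1 * eps' ≤ G1 * (ustar/(2*G1)) := by nlinarith
      have h5 : G1 * (ustar/(2*G1)) = ustar / 2 := by field_simp
      linarith
    rw [← hseq] at h1
    linarith
  -- sup of |φ| on [0, s_in]
  obtain ⟨x₀, hx₀mem, hx₀max⟩ := isCompact_Icc.exists_isMaxOn
    (Set.nonempty_Icc.mpr hsin.le)
    (((hμ.continuous.sub (hsatc.comp (continuous_const.sub
      (continuous_const.mul (continuous_id.sub continuous_const))))).abs).continuousOn :
      ContinuousOn (fun x => |μ x - sat Dmin Dmax (Dbar - G1 * (x - sbar))|) (Set.Icc 0 s_in))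
  obtain ⟨Cphi, hCphi⟩ : ∃ c : ℝ, c = |μ x₀ - sat Dmin Dmax (Dbar - G1 * (x₀ - sbar))| := ⟨_, rfl⟩
  have hCphi0 : 0 ≤ Cphi := by rw [hCphi]; exact abs_nonneg _
  -- min of φ on [x1, s_in]
  obtain ⟨z, hzmem, hzmin⟩ := isCompact_Icc.exists_isMinOn
    (Set.nonempty_Icc.mpr hx1lt.le)
    ((hμ.continuous.sub (hsatc.comp (continuous_const.sub
      (continuous_const.mul (continuous_id.sub continuous_const))))).continuousOn :
      ContinuousOn (fun x => μ x - sat Dmin Dmax (Dbar - G1 * (x - sbar))) (Set.Icc x1 s_in))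
  obtain ⟨m1, hm1⟩ : ∃ m : ℝ, m = μ z - sat Dmin Dmax (Dbar - G1 * (z - sbar)) := ⟨_, rfl⟩
  have hm1pos : 0 < m1 := by
    rw [hm1]
    have hz1 : s_eq < z := lt_of_lt_of_le hx1gt hzmem.1
    have hz2 : z ∈ Set.Icc 0 s_in := ⟨le_trans hx1pos hzmem.1, hzmem.2⟩
    linarith [(hsign z hz2).2 hz1]
  obtain ⟨m0, hm0⟩ : ∃ m : ℝ, m = min m1 1 := ⟨_, rfl⟩
  have hm0pos : 0 < m0 := by rw [hm0]; exact lt_min hm1pos one_pos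
  obtain ⟨K, hK⟩ : ∃ k : ℝ, k = 2*(Cphi+1)/ustar := ⟨_, rfl⟩
  have hKpos : 0 < K := by rw [hK]; positivity
  -- pointwise estimate
  have hpt : ∀ τ : ℝ, m0 ≤ phiC μ s Dmin Dmax Dbar G1 sbar τ
      + K * uC s Dmin Dmax Dbar G1 sbar τ := by
    intro τ
    have hxmem := hsmem (max τ 0) (le_max_right τ 0)
    unfold phiC uC
    by_cases hcase : s (max τ 0) ≤ x1
    · have hanti : sat Dmin Dmax (Dbar - G1 * (x1 - sbar))
          ≤ sat Dmin Dmax (Dbar - G1 * (s (max τ 0) - sbar)) := by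
        apply sat_anti _ _ hDDle
        nlinarith
      have hUge : ustar/2 ≤ sat Dmin Dmax (Dbar - G1 * (s (max τ 0) - sbar)) :=
        le_trans hUx1 hanti
      have hphi : -Cphi ≤ μ (s (max τ 0)) - sat Dmin Dmax (Dbar - G1 * (s (max τ 0) - sbar)) := by
        have h := hx₀max hxmem
        have h2 := neg_abs_le (μ (s (max τ 0))
          - sat Dmin Dmax (Dbar - G1 * (s (max τ 0) - sbar)))
        simp only [Pi.sub_apply, Pi.mul_apply, Function.comp_apply, id_eq, Set.mem_setOf_eq] at h
        rw [hCphi]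
        linarith
      have hKU : Cphi + 1 ≤ K * sat Dmin Dmax (Dbar - G1 * (s (max τ 0) - sbar)) := by
        have h1 : K * (ustar/2) = Cphi + 1 := by
          have hne : ustar ≠ 0 := ne_of_gt hustarpos
          rw [hK]; field_simp
        calc Cphi + 1 = K * (ustar/2) := h1.symm
          _ ≤ K * sat Dmin Dmax (Dbar - G1 * (s (max τ 0) - sbar)) :=
            mul_le_mul_of_nonneg_left hUge hKpos.le
      have : m0 ≤ 1 := by rw [hm0]; exact min_le_right _ _
      linarith
    · push_neg at hcase
      have hphi : m1 ≤ μ (s (max τ 0)) - sat Dmin Dmax (Dbar - G1 * (s (max τ 0) - sbar)) := by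
        have hh := hzmin ⟨hcase.le, hxmem.2⟩
        simp only [Pi.sub_apply, Pi.mul_apply, Function.comp_apply, id_eq, Set.mem_setOf_eq] at hh
        rw [hm1]
        linarith
      have hKU : 0 ≤ K * sat Dmin Dmax (Dbar - G1 * (s (max τ 0) - sbar)) :=
        mul_nonneg hKpos.le (le_trans hDmin (sat_ge _ _ _ hDDle))
      have : m0 ≤ m1 := by rw [hm0]; exact min_le_left _ _
      linarith
  -- integral of phiC is bounded above
  have hIb : ∀ T ≥ (0:ℝ), (∫ τ in (0:ℝ)..T, phiC μ s Dmin Dmax Dbar G1 sbar τ)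
      ≤ Real.log (B / b 0) := by
    intro T hT
    have h1 := hbrep T hT
    have h2 := hbB T hT
    have h3 : Real.exp (∫ τ in (0:ℝ)..T, phiC μ s Dmin Dmax Dbar G1 sbar τ) ≤ B / b 0 := by
      rw [le_div_iff₀ hb0, mul_comm, ← h1]
      exact h2
    exact (Real.le_log_iff_exp_le (div_pos hBpos hb0)).mpr h3
  -- lower bound on the integral of uC
  have hJlb : ∀ T ≥ (0:ℝ), m0 * T - Real.log (B / b 0)
      ≤ K * ∫ τ in (0:ℝ)..T, uC s Dmin Dmax Dbar G1 sbar τ := by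
    intro T hT
    have hint1 : IntervalIntegrable (phiC μ s Dmin Dmax Dbar G1 sbar)
        MeasureTheory.volume 0 T := hphiCc.intervalIntegrable _ _
    have hint2 : IntervalIntegrable (fun τ => K * uC s Dmin Dmax Dbar G1 sbar τ)
        MeasureTheory.volume 0 T := (continuous_const.mul huCc).intervalIntegrable _ _
    have hmono := intervalIntegral.integral_mono_on hT
      ((continuous_const : Continuous (fun _ : ℝ => m0)).intervalIntegrable _ _)
      (hint1.add hint2) (fun x _ => hpt x)
    rw [intervalIntegral.integral_const] at hmono
    rw [intervalIntegral.integral_add hint1 hint2] at hmono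
    rw [intervalIntegral.integral_const_mul] at hmono
    simp only [smul_eq_mul, sub_zero] at hmono
    have := hIb T hT
    linarith
  -- w tends to 0
  have hwlim : Filter.Tendsto (fun t => s t + b t - s_in) Filter.atTop (nhds 0) := by
    obtain ⟨L, hL⟩ : ∃ l : ℝ, l = Real.log (B / b 0) := ⟨_, rfl⟩
    obtain ⟨W0, hW0⟩ : ∃ w : ℝ, w = |s 0 + b 0 - s_in| := ⟨_, rfl⟩
    have hbound : ∀ t ≥ (0:ℝ), |s t + b t - s_in|
        ≤ W0 * Real.exp (-((m0*t - L)/K)) := by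
      intro t ht
      rw [hwrep t ht, abs_mul, Real.abs_exp, intervalIntegral.integral_neg, ← hW0]
      have h1 : (m0*t - L)/K ≤ ∫ τ in (0:ℝ)..t, uC s Dmin Dmax Dbar G1 sbar τ := by
        rw [div_le_iff₀ hKpos]
        have := hJlb t ht
        rw [← hL] at this
        linarith [mul_comm K (∫ τ in (0:ℝ)..t, uC s Dmin Dmax Dbar G1 sbar τ)]
      have h2 : Real.exp (-∫ τ in (0:ℝ)..t, uC s Dmin Dmax Dbar G1 sbar τ)
          ≤ Real.exp (-((m0*t - L)/K)) := Real.exp_le_exp.mpr (by linarith)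
      have hW00 : 0 ≤ W0 := by rw [hW0]; exact abs_nonneg _
      nlinarith [Real.exp_pos (-((m0*t - L)/K))]
    have hlin1 : Filter.Tendsto (fun t : ℝ => (m0/K) * t + (-(L/K))) Filter.atTop
        Filter.atTop := by
      apply Filter.tendsto_atTop_add_const_right
      exact Filter.Tendsto.const_mul_atTop (by positivity) Filter.tendsto_id
    have hlin : Filter.Tendsto (fun t : ℝ => -((m0*t - L)/K)) Filter.atTop Filter.atBot := by
      have heq : (fun t : ℝ => -((m0*t - L)/K))
          = (fun y : ℝ => -y) ∘ (fun t : ℝ => (m0/K) * t + (-(L/K))) := by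
        funext t
        simp only [Function.comp_apply]
        field_simp
        ring
      rw [heq]
      exact tendsto_neg_atTop_atBot.comp hlin1
    have hexp : Filter.Tendsto (fun t : ℝ => Real.exp (-((m0*t - L)/K)))
        Filter.atTop (nhds 0) := Real.tendsto_exp_atBot.comp hlin
    have hG : Filter.Tendsto (fun t : ℝ => W0 * Real.exp (-((m0*t - L)/K)))
        Filter.atTop (nhds 0) := by
      have := hexp.const_mul W0
      simpa using this
    have hGneg : Filter.Tendsto (fun t : ℝ => -(W0 * Real.exp (-((m0*t - L)/K))))
        Filter.atTop (nhds 0) := by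
      have := hG.neg
      simpa using this
    apply tendsto_of_tendsto_of_tendsto_of_le_of_le' hGneg hG
    · filter_upwards [Filter.eventually_ge_atTop (0:ℝ)] with t ht
      linarith [(abs_le.mp (hbound t ht)).1]
    · filter_upwards [Filter.eventually_ge_atTop (0:ℝ)] with t ht
      linarith [(abs_le.mp (hbound t ht)).2]
  -- shifted representation of b
  have hshift : ∀ t₀ t : ℝ, 0 ≤ t₀ → t₀ ≤ t →
      b t = b t₀ * Real.exp (∫ τ in t₀..t, phiC μ s Dmin Dmax Dbar G1 sbar τ) :=
    fun t₀ t h0 ht => ode_exp_shift _ b hphiCc hbder h0 ht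
  -- convergence of s
  have hslim : Filter.Tendsto s Filter.atTop (nhds s_eq) := by
    rw [Metric.tendsto_atTop]
    intro ε hε
    obtain ⟨e, he⟩ : ∃ e : ℝ, e = min (ε/2) (min (s_eq/2) ((s_in - s_eq)/2)) := ⟨_, rfl⟩
    have he0 : 0 < e := by
      rw [he]; apply lt_min (by linarith) (lt_min (by linarith) (by linarith))
    have heε : e < ε := by
      have : e ≤ ε/2 := by rw [he]; exact min_le_left _ _
      linarith
    have he1 : e ≤ s_eq/2 := by
      rw [he]; exact le_trans (min_le_right _ _) (min_le_left _ _)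
    have he2 : e ≤ (s_in - s_eq)/2 := by
      rw [he]; exact le_trans (min_le_right _ _) (min_le_right _ _)
    obtain ⟨ap, hap⟩ : ∃ x : ℝ, x = s_eq + e := ⟨_, rfl⟩
    obtain ⟨am, ham⟩ : ∃ x : ℝ, x = s_eq - e := ⟨_, rfl⟩
    have hapmem : ap ∈ Set.Icc 0 s_in := by rw [hap]; constructor <;> [linarith; linarith]
    have hammem : am ∈ Set.Icc 0 s_in := by rw [ham]; constructor <;> [linarith; linarith]
    have hapgt : s_eq < ap := by rw [hap]; linarith
    have hamlt : am < s_eq := by rw [ham]; linarith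
    have haplt : ap < s_in := by rw [hap]; linarith
    have hampos : 0 < am := by rw [ham]; linarith
    -- boundary sign values
    have hphip : 0 < μ ap - sat Dmin Dmax (Dbar - G1 * (ap - sbar)) := by
      linarith [(hsign ap hapmem).2 hapgt]
    have hphim : 0 < sat Dmin Dmax (Dbar - G1 * (am - sbar)) - μ am := by
      linarith [(hsign am hammem).1 hamlt]
    -- min of φ on [ap, s_in]
    obtain ⟨zA, hzAmem, hzAmin⟩ := isCompact_Icc.exists_isMinOn
      (Set.nonempty_Icc.mpr haplt.le)
      ((hμ.continuous.sub (hsatc.comp (continuous_const.sub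
        (continuous_const.mul (continuous_id.sub continuous_const))))).continuousOn :
        ContinuousOn (fun x => μ x - sat Dmin Dmax (Dbar - G1 * (x - sbar))) (Set.Icc ap s_in))
    obtain ⟨mA, hmA⟩ : ∃ m : ℝ, m = μ zA - sat Dmin Dmax (Dbar - G1 * (zA - sbar)) := ⟨_, rfl⟩
    have hmApos : 0 < mA := by
      rw [hmA]
      have hz1 : s_eq < zA := lt_of_lt_of_le hapgt hzAmem.1
      have hz2 : zA ∈ Set.Icc 0 s_in := ⟨le_trans hapmem.1 hzAmem.1, hzAmem.2⟩
      linarith [(hsign zA hz2).2 hz1]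
    -- max of φ on [0, am]
    obtain ⟨zB, hzBmem, hzBmax⟩ := isCompact_Icc.exists_isMaxOn
      (Set.nonempty_Icc.mpr hampos.le)
      ((hμ.continuous.sub (hsatc.comp (continuous_const.sub
        (continuous_const.mul (continuous_id.sub continuous_const))))).continuousOn :
        ContinuousOn (fun x => μ x - sat Dmin Dmax (Dbar - G1 * (x - sbar))) (Set.Icc 0 am))
    obtain ⟨mB, hmB⟩ : ∃ m : ℝ, m = μ zB - sat Dmin Dmax (Dbar - G1 * (zB - sbar)) := ⟨_, rfl⟩
    have hmBneg : mB < 0 := by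
      rw [hmB]
      have hz1 : zB < s_eq := lt_of_le_of_lt hzBmem.2 hamlt
      have hz2 : zB ∈ Set.Icc 0 s_in := ⟨hzBmem.1, le_trans hzBmem.2 (le_trans hamlt.le hseqlt.le)⟩
      linarith [(hsign zB hz2).1 hz1]
    -- threshold for |w|
    obtain ⟨δ, hδ⟩ : ∃ d : ℝ, d = min
        ((μ ap - sat Dmin Dmax (Dbar - G1 * (ap - sbar))) * (s_in - ap) / (|μ ap| + 1))
        (min ((sat Dmin Dmax (Dbar - G1 * (am - sbar)) - μ am) * (s_in - am) / (|μ am| + 1))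
          ((s_in - s_eq)/2)) := ⟨_, rfl⟩
    have habs_pos1 : (0:ℝ) < |μ ap| + 1 := by positivity
    have habs_pos2 : (0:ℝ) < |μ am| + 1 := by positivity
    have hsinam : 0 < s_in - am := by rw [ham]; linarith
    have hsina : 0 < s_in - ap := by linarith
    have hδ0 : 0 < δ := by
      rw [hδ]
      apply lt_min
      · positivity
      · apply lt_min
        · positivity
        · linarith
    have hδ1 : δ * (|μ ap| + 1) ≤ (μ ap - sat Dmin Dmax (Dbar - G1 * (ap - sbar))) * (s_in - ap) := by
      have h1 : δ ≤ (μ ap - sat Dmin Dmax (Dbar - G1 * (ap - sbar))) * (s_in - ap) / (|μ ap| + 1) := by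
        rw [hδ]; exact min_le_left _ _
      rw [← le_div_iff₀ habs_pos1]
      exact h1
    have hδ2 : δ * (|μ am| + 1) ≤ (sat Dmin Dmax (Dbar - G1 * (am - sbar)) - μ am) * (s_in - am) := by
      have h1 : δ ≤ (sat Dmin Dmax (Dbar - G1 * (am - sbar)) - μ am) * (s_in - am) / (|μ am| + 1) := by
        rw [hδ]; exact le_trans (min_le_right _ _) (min_le_left _ _)
      rw [← le_div_iff₀ habs_pos2]
      exact h1
    have hδ3 : δ ≤ (s_in - s_eq)/2 := by
      rw [hδ]; exact le_trans (min_le_right _ _) (min_le_right _ _)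
    -- time after which |w| < δ
    obtain ⟨N, hN⟩ := (Metric.tendsto_atTop.mp hwlim) δ hδ0
    obtain ⟨T₀, hT₀⟩ : ∃ x : ℝ, x = max N 0 := ⟨_, rfl⟩
    have hT₀0 : 0 ≤ T₀ := by rw [hT₀]; exact le_max_right _ _
    have hwsmall : ∀ t ≥ T₀, |s t + b t - s_in| < δ := by
      intro t ht
      have h := hN t (le_trans (by rw [hT₀]; exact le_max_left _ _) ht)
      rw [Real.dist_eq, sub_zero] at h
      exact h
    -- Claim A : s drops below ap infinitely often
    have hA : ∀ t₀ ≥ T₀, ∃ t1 ≥ t₀, s t1 < ap := by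
      intro t₀ ht₀
      by_contra hcon
      push_neg at hcon
      have ht₀0 : 0 ≤ t₀ := le_trans hT₀0 ht₀
      have hbt₀ := hbpos t₀ ht₀0
      have hone : 1 ≤ B / b t₀ := (one_le_div hbt₀).mpr (hbB t₀ ht₀0)
      have hlog0 : 0 ≤ Real.log (B / b t₀) := Real.log_nonneg hone
      obtain ⟨T, hTdef⟩ : ∃ T : ℝ, T = t₀ + Real.log (B / b t₀) / mA + 1 := ⟨_, rfl⟩
      have hTt₀ : t₀ ≤ T := by
        rw [hTdef]
        have : 0 ≤ Real.log (B / b t₀) / mA := div_nonneg hlog0 hmApos.le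
        linarith
      have hintlb : mA * (T - t₀) ≤ ∫ τ in t₀..T, phiC μ s Dmin Dmax Dbar G1 sbar τ := by
        have hi1 : IntervalIntegrable (fun _ : ℝ => mA) MeasureTheory.volume t₀ T :=
          intervalIntegrable_const
        have hi2 : IntervalIntegrable (phiC μ s Dmin Dmax Dbar G1 sbar)
            MeasureTheory.volume t₀ T := hphiCc.intervalIntegrable _ _
        have hmono := intervalIntegral.integral_mono_on hTt₀ hi1 hi2
          (fun τ hτ => by
            have hτ0 : (0:ℝ) ≤ τ := le_trans ht₀0 hτ.1
            unfold phiC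
            rw [max_eq_left hτ0]
            have hsτ : s τ ∈ Set.Icc ap s_in :=
              ⟨hcon τ (le_trans hτ.1 (le_refl τ)), (hsub τ hτ0).le⟩
            have hh := hzAmin hsτ
            simp only [Pi.sub_apply, Pi.mul_apply, Function.comp_apply, id_eq, Set.mem_setOf_eq] at hh
            rw [hmA]
            linarith)
        rw [intervalIntegral.integral_const, smul_eq_mul] at hmono
        linarith [mul_comm (T - t₀) mA]
      have hbT : b T = b t₀ * Real.exp (∫ τ in t₀..T, phiC μ s Dmin Dmax Dbar G1 sbar τ) :=
        hshift t₀ T ht₀0 hTt₀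
      have hgr : B * Real.exp mA ≤ b T := by
        rw [hbT]
        have h1 : mA * (T - t₀) = Real.log (B / b t₀) + mA := by
          rw [hTdef]
          field_simp
          ring
        have h2 : Real.exp (Real.log (B / b t₀) + mA)
            ≤ Real.exp (∫ τ in t₀..T, phiC μ s Dmin Dmax Dbar G1 sbar τ) := by
          apply Real.exp_le_exp.mpr
          rw [← h1]
          exact hintlb
        have h3 : Real.exp (Real.log (B / b t₀) + mA) = (B / b t₀) * Real.exp mA := by
          rw [Real.exp_add, Real.exp_log (div_pos hBpos hbt₀)]
        calc B * Real.exp mA = b t₀ * ((B / b t₀) * Real.exp mA) := by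
              field_simp
          _ = b t₀ * Real.exp (Real.log (B / b t₀) + mA) := by rw [h3]
          _ ≤ b t₀ * Real.exp (∫ τ in t₀..T, phiC μ s Dmin Dmax Dbar G1 sbar τ) :=
              mul_le_mul_of_nonneg_left h2 hbt₀.le
      have hexp1 : 1 < Real.exp mA := by
        have := Real.exp_lt_exp.mpr hmApos
        simpa using this
      have hbTB := hbB T (le_trans ht₀0 hTt₀)
      have hfin : B * 1 < B * Real.exp mA := mul_lt_mul_of_pos_left hexp1 hBpos
      linarith
    -- Claim B : s rises above am infinitely often (after T₀)
    have hBclaim : ∀ t₀ ≥ T₀, ∃ t1 ≥ t₀, am < s t1 := by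
      intro t₀ ht₀
      by_contra hcon
      push_neg at hcon
      have ht₀0 : 0 ≤ t₀ := le_trans hT₀0 ht₀
      have hbt₀ := hbpos t₀ ht₀0
      obtain ⟨β, hβ⟩ : ∃ x : ℝ, x = (s_in - s_eq)/2 := ⟨_, rfl⟩
      have hβ0 : 0 < β := by rw [hβ]; linarith
      have hblow : ∀ t ≥ t₀, β ≤ b t := by
        intro t ht
        have hw := hwsmall t (le_trans ht₀ ht)
        have h1 := (abs_lt.mp hw).1
        have h2 := hcon t ht
        rw [hβ]
        rw [ham] at h2
        linarith [hδ3]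
      have hone : 1 ≤ b t₀ / β := (one_le_div hβ0).mpr (hblow t₀ le_rfl)
      have hlog0 : 0 ≤ Real.log (b t₀ / β) := Real.log_nonneg hone
      obtain ⟨T, hTdef⟩ : ∃ T : ℝ, T = t₀ + Real.log (b t₀ / β) / (-mB) + 1 := ⟨_, rfl⟩
      have hmBpos : 0 < -mB := by linarith
      have hTt₀ : t₀ ≤ T := by
        rw [hTdef]
        have : 0 ≤ Real.log (b t₀ / β) / (-mB) := div_nonneg hlog0 hmBpos.le
        linarith
      have hintub : (∫ τ in t₀..T, phiC μ s Dmin Dmax Dbar G1 sbar τ) ≤ mB * (T - t₀) := by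
        have hi1 : IntervalIntegrable (fun _ : ℝ => mB) MeasureTheory.volume t₀ T :=
          intervalIntegrable_const
        have hi2 : IntervalIntegrable (phiC μ s Dmin Dmax Dbar G1 sbar)
            MeasureTheory.volume t₀ T := hphiCc.intervalIntegrable _ _
        have hmono := intervalIntegral.integral_mono_on hTt₀ hi2 hi1
          (fun τ hτ => by
            have hτ0 : (0:ℝ) ≤ τ := le_trans ht₀0 hτ.1
            unfold phiC
            rw [max_eq_left hτ0]
            have hsτ : s τ ∈ Set.Icc 0 am := ⟨hslb τ hτ0, hcon τ hτ.1⟩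
            have hh := hzBmax hsτ
            simp only [Pi.sub_apply, Pi.mul_apply, Function.comp_apply, id_eq, Set.mem_setOf_eq] at hh
            rw [hmB]
            linarith)
        rw [intervalIntegral.integral_const, smul_eq_mul] at hmono
        linarith [mul_comm (T - t₀) mB]
      have hbT : b T = b t₀ * Real.exp (∫ τ in t₀..T, phiC μ s Dmin Dmax Dbar G1 sbar τ) :=
        hshift t₀ T ht₀0 hTt₀
      have hdec : b T ≤ β * Real.exp mB := by
        rw [hbT]
        have h1 : mB * (T - t₀) = -(Real.log (b t₀ / β)) + mB := by
          rw [hTdef]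
          field_simp [hmBneg.ne]
          ring
        have h2 : Real.exp (∫ τ in t₀..T, phiC μ s Dmin Dmax Dbar G1 sbar τ)
            ≤ Real.exp (-(Real.log (b t₀ / β)) + mB) := by
          apply Real.exp_le_exp.mpr
          rw [← h1]
          exact hintub
        have h3 : Real.exp (-(Real.log (b t₀ / β)) + mB) = (β / b t₀) * Real.exp mB := by
          rw [Real.exp_add, Real.exp_neg, Real.exp_log (div_pos hbt₀ hβ0)]
          field_simp
        calc b t₀ * Real.exp (∫ τ in t₀..T, phiC μ s Dmin Dmax Dbar G1 sbar τ)
            ≤ b t₀ * ((β / b t₀) * Real.exp mB) := by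
              rw [← h3]
              exact mul_le_mul_of_nonneg_left h2 hbt₀.le
          _ = β * Real.exp mB := by field_simp
      have hexp1 : Real.exp mB < 1 := by
        have := Real.exp_lt_exp.mpr hmBneg
        simpa using this
      have := hblow T hTt₀
      have hfin : β * Real.exp mB < β * 1 := mul_lt_mul_of_pos_left hexp1 hβ0
      linarith
    -- entry into the interval (am, ap)
    have hentry : ∃ t3 ≥ T₀, am < s t3 ∧ s t3 < ap := by
      obtain ⟨t1, ht1T, ht1⟩ := hA T₀ le_rfl
      by_cases h : am < s t1
      · exact ⟨t1, ht1T, h, ht1⟩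
      · push_neg at h
        obtain ⟨t2, ht2t1, ht2⟩ := hBclaim t1 ht1T
        by_cases h2 : s t2 < ap
        · exact ⟨t2, le_trans ht1T ht2t1, ht2, h2⟩
        · push_neg at h2
          have hcontOn : ContinuousOn s (Set.Icc t1 t2) := fun τ hτ =>
            (hscont τ (le_trans (le_trans hT₀0 ht1T) hτ.1)).continuousWithinAt
          have hmem : s_eq ∈ Set.Icc (s t1) (s t2) := by
            constructor
            · linarith
            · linarith
          obtain ⟨t3, ht3mem, hst3⟩ := intermediate_value_Icc ht2t1 hcontOn hmem
          refine ⟨t3, le_trans ht1T ht3mem.1, ?_, ?_⟩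
          · rw [hst3]; exact hamlt
          · rw [hst3]; exact hapgt
    obtain ⟨t3, ht3T, ht3l, ht3u⟩ := hentry
    have ht30 : 0 ≤ t3 := le_trans hT₀0 ht3T
    -- trapping above
    have htrapU : ∀ t ≥ t3, s t < ap := by
      apply barrier_lt s t3 ap (fun t ht => hscont t (le_trans ht30 ht)) _ ht3u
      intro t ht hst
      have ht0 : 0 ≤ t := le_trans ht30 ht
      refine ⟨-(μ ap) * b t + sat Dmin Dmax (Dbar - G1 * (ap - sbar)) * (s_in - ap), ?_, ?_⟩
      · have hw := hwsmall t (le_trans ht3T ht)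
        rw [hst] at hw
        have h1 : -(|μ ap| * |ap + b t - s_in|) ≤ μ ap * (ap + b t - s_in) := by
          rw [← abs_mul]
          exact neg_abs_le _
        have h2 : |μ ap| * |ap + b t - s_in| ≤ |μ ap| * δ :=
          mul_le_mul_of_nonneg_left hw.le (abs_nonneg _)
        have h2b : |μ ap| * δ < (|μ ap| + 1) * δ :=
          mul_lt_mul_of_pos_right (lt_add_one _) hδ0
        have hgoal : -(μ ap) * b t + sat Dmin Dmax (Dbar - G1 * (ap - sbar)) * (s_in - ap)
            = -((μ ap - sat Dmin Dmax (Dbar - G1 * (ap - sbar))) * (s_in - ap))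
              - μ ap * (ap + b t - s_in) := by ring
        rw [hgoal]
        linarith [hδ1]
      · have := (hsol t ht0).1
        rw [hst] at this
        exact this
    -- trapping below
    have htrapL : ∀ t ≥ t3, am < s t := by
      have h := barrier_lt (fun t => -(s t)) t3 (-am)
        (fun t ht => (hscont t (le_trans ht30 ht)).neg) ?_ (by simpa using ht3l)
      · intro t ht
        have := h t ht
        linarith
      · intro t ht hst
        have ht0 : 0 ≤ t := le_trans ht30 ht
        have hst' : s t = am := by
          have : -(s t) = -am := hst
          linarith
        refine ⟨μ am * b t - sat Dmin Dmax (Dbar - G1 * (am - sbar)) * (s_in - am), ?_, ?_⟩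
        · have hw := hwsmall t (le_trans ht3T ht)
          rw [hst'] at hw
          have h1 : μ am * (am + b t - s_in) ≤ |μ am| * |am + b t - s_in| := by
            rw [← abs_mul]
            exact le_abs_self _
          have h2 : |μ am| * |am + b t - s_in| ≤ |μ am| * δ :=
            mul_le_mul_of_nonneg_left hw.le (abs_nonneg _)
          have h2b : |μ am| * δ < (|μ am| + 1) * δ :=
            mul_lt_mul_of_pos_right (lt_add_one _) hδ0
          have hgoal : μ am * b t - sat Dmin Dmax (Dbar - G1 * (am - sbar)) * (s_in - am)
              = -((sat Dmin Dmax (Dbar - G1 * (am - sbar)) - μ am) * (s_in - am))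
                + μ am * (am + b t - s_in) := by ring
          rw [hgoal]
          linarith [hδ2]
        · have hd := ((hsol t ht0).1).neg
          rw [hst'] at hd
          refine hd.congr_deriv ?_
          ring
    refine ⟨t3, fun t ht => ?_⟩
    have h1 := htrapU t ht
    have h2 := htrapL t ht
    rw [Real.dist_eq, abs_lt]
    constructor
    · rw [ham] at h2; linarith
    · rw [hap] at h1; linarith
  -- convergence of b
  have hblim : Filter.Tendsto b Filter.atTop (nhds (s_in - s_eq)) := by
    have h1 : Filter.Tendsto (fun t => (s t + b t - s_in) - s t + s_in) Filter.atTop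
        (nhds ((0 - s_eq) + s_in)) := (hwlim.sub hslim).add_const s_in
    have h2 : (fun t => (s t + b t - s_in) - s t + s_in) = b := by
      funext t; ring
    rw [h2] at h1
    have h3 : (0 : ℝ) - s_eq + s_in = s_in - s_eq := by ring
    rw [h3] at h1
    exact h1
  exact hslim.prodMk_nhds hblim
end

section
/- Let u : [0,∞) → ℝ be continuous with 0 ≤ u(t) for all t ≥ 0, and assume additionally μ(s) ≥ 0 for all s ≥ 0. Then the region [0, s_in] × [0, ∞) is positively invariant for the chemostat with time-varying input u(t): every solution t ↦ (s(t), b(t)) on [0,∞) with s(0) ∈ [0, s_in] and b(0) ≥ 0 satisfies s(t) ∈ [0, s_in] and b(t) ≥ 0 for all t ≥ 0. -/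
open Set

/-- Gronwall-type nonpositivity lemma. -/
lemma gron (v dv : ℝ → ℝ) (K T : ℝ)
    (hv : ∀ t ∈ Set.Icc (0:ℝ) T, HasDerivAt v (dv t) t)
    (hb : ∀ t ∈ Set.Icc (0:ℝ) T, 0 ≤ v t → dv t ≤ K * v t)
    (h0 : v 0 ≤ 0) : ∀ t ∈ Set.Icc (0:ℝ) T, v t ≤ 0 := by
  intro t₁ ht₁
  by_contra hpos
  push_neg at hpos
  have hcontOn : ContinuousOn v (Icc 0 t₁) := fun x hx =>
    ((hv x ⟨hx.1, hx.2.trans ht₁.2⟩).continuousAt).continuousWithinAt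
  set S : Set ℝ := Icc 0 t₁ ∩ v ⁻¹' (Iic 0) with hS
  have hSne : S.Nonempty := ⟨0, ⟨le_refl 0, ht₁.1⟩, h0⟩
  have hSbdd : BddAbove S := BddAbove.mono (fun x hx => hx.1) bddAbove_Icc
  have hSclosed : IsClosed S :=
    hcontOn.preimage_isClosed_of_isClosed isClosed_Icc isClosed_Iic
  set t₀ := sSup S with ht₀def
  have ht₀S : t₀ ∈ S := hSclosed.csSup_mem hSne hSbdd
  have ht₀1 : t₀ ≤ t₁ := ht₀S.1.2
  have ht₀0 : 0 ≤ t₀ := ht₀S.1.1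
  have ht₀lt : t₀ < t₁ := lt_of_le_of_ne ht₀1 (by
    intro h; rw [h] at ht₀S; exact absurd ht₀S.2 (not_le.2 hpos))
  -- on (t₀, t₁], v > 0
  have hvpos : ∀ x ∈ Ioc t₀ t₁, 0 < v x := by
    intro x hx
    by_contra hle
    push_neg at hle
    have : x ∈ S := ⟨⟨ht₀0.trans hx.1.le, hx.2⟩, hle⟩
    exact absurd (le_csSup hSbdd this) (not_le.2 hx.1)
  -- the auxiliary function
  set h : ℝ → ℝ := fun t => v t * Real.exp (-K * t) with hh
  have hderiv : ∀ x ∈ Icc (0:ℝ) T,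
      HasDerivAt h ((dv x - K * v x) * Real.exp (-K * x)) x := by
    intro x hx
    have h1 := (hv x hx).mul ((Real.hasDerivAt_exp (-K * x)).comp x
      ((hasDerivAt_id x).const_mul (-K)))
    convert h1 using 1
    · rfl
    · rfl
    · rfl
    simp only [Function.comp]
    ring
  have hanti : AntitoneOn h (Icc t₀ t₁) := by
    apply antitoneOn_of_hasDerivWithinAt_nonpos (convex_Icc _ _)
      (f' := fun x => (dv x - K * v x) * Real.exp (-K * x))
    · intro x hx
      exact (hderiv x ⟨ht₀0.trans hx.1, hx.2.trans ht₁.2⟩).continuousAt.continuousWithinAt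
    · intro x hx
      rw [interior_Icc] at hx
      exact (hderiv x ⟨ht₀0.trans hx.1.le, hx.2.le.trans ht₁.2⟩).hasDerivWithinAt
    · intro x hx
      rw [interior_Icc] at hx
      have hvx : 0 ≤ v x := (hvpos x ⟨hx.1, hx.2.le⟩).le
      have := hb x ⟨ht₀0.trans hx.1.le, hx.2.le.trans ht₁.2⟩ hvx
      have : dv x - K * v x ≤ 0 := by linarith
      exact mul_nonpos_of_nonpos_of_nonneg this (Real.exp_pos _).le
  have := hanti ⟨le_refl t₀, ht₀lt.le⟩ ⟨ht₀lt.le, le_refl t₁⟩ ht₀lt.le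
  have ht0le : h t₀ ≤ 0 :=
    mul_nonpos_of_nonpos_of_nonneg ht₀S.2 (Real.exp_pos _).le
  have : h t₁ ≤ 0 := this.trans ht0le
  have : v t₁ ≤ 0 := by
    by_contra hc
    push_neg at hc
    exact absurd this (not_le.2 (mul_pos hc (Real.exp_pos _)))
  exact absurd this (not_le.2 hpos)

/-- Positive invariance of the region `[0, s_in] × [0, ∞)` for the chemostat
with nonnegative time-varying input. -/
theorem stmt_6
    (μ : ℝ → ℝ) (s_in : ℝ)
    (hμ : ContDiff ℝ 1 μ) (hμ0 : μ 0 = 0)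
    (hμpos : ∀ x ∈ Set.Ioc 0 s_in, 0 < μ x) (hsin : 0 < s_in)
    (hμnonneg : ∀ x ≥ (0:ℝ), 0 ≤ μ x)
    (u s b : ℝ → ℝ) (hu : ContinuousOn u (Set.Ici 0))
    (hunonneg : ∀ t ≥ (0:ℝ), 0 ≤ u t)
    (hsol : ∀ t ≥ (0:ℝ),
      HasDerivAt s (-(μ (s t)) * b t + u t * (s_in - s t)) t ∧
      HasDerivAt b (μ (s t) * b t - u t * b t) t)
    (hs0 : s 0 ∈ Set.Icc 0 s_in) (hb0 : 0 ≤ b 0) :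
    ∀ t ≥ (0:ℝ), s t ∈ Set.Icc 0 s_in ∧ 0 ≤ b t := by
  have hμcont : Continuous μ := hμ.continuous
  have hsC : ∀ t : ℝ, 0 ≤ t → ContinuousAt s t := fun t ht => (hsol t ht).1.continuousAt
  have hbC : ∀ t : ℝ, 0 ≤ t → ContinuousAt b t := fun t ht => (hsol t ht).2.continuousAt
  have hmax : Continuous (fun t : ℝ => max t 0) := continuous_id.max continuous_const
  -- extended (everywhere-continuous) versions
  have hsOn : ContinuousOn s (Set.Ici 0) := fun x hx => (hsC x hx).continuousWithinAt
  have hscont : Continuous (fun t : ℝ => s (max t 0)) :=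
    hsOn.comp_continuous hmax (fun x => le_max_right x 0)
  have hucont : Continuous (fun t : ℝ => u (max t 0)) :=
    hu.comp_continuous hmax (fun x => le_max_right x 0)
  set c : ℝ → ℝ := fun t => μ (s (max t 0)) - u (max t 0) with hc
  have hccont : Continuous c := (hμcont.comp hscont).sub hucont
  set I : ℝ → ℝ := fun t => ∫ x in (0:ℝ)..t, c x with hIdef
  have hI : ∀ t : ℝ, HasDerivAt I (c t) t := fun t =>
    (hccont.integral_hasStrictDerivAt 0 t).hasDerivAt
  -- nonnegativity of b
  have hbnn : ∀ t : ℝ, 0 ≤ t → 0 ≤ b t := by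
    intro T hT
    set g : ℝ → ℝ := fun t => b t * Real.exp (-(I t)) with hg
    have hgd : ∀ x ∈ Set.Ico (0:ℝ) T, HasDerivWithinAt g 0 (Set.Ici x) x := by
      intro x hx
      have hb' := (hsol x hx.1).2
      have hexp : HasDerivAt (fun t => Real.exp (-(I t))) (-(c x) * Real.exp (-(I x))) x := by
        have := (Real.hasDerivAt_exp (-(I x))).comp x ((hI x).neg)
        convert this using 1
        · rfl
        · rfl
        · rfl
        simp [mul_comm]
      have := hb'.mul hexp
      have hcx : c x = μ (s x) - u x := by
        simp [hc, max_eq_left hx.1]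
      have h0 : (μ (s x) * b x - u x * b x) * Real.exp (-(I x))
          + b x * (-(c x) * Real.exp (-(I x))) = 0 := by
        rw [hcx]; ring
      rw [← h0]
      exact this.hasDerivWithinAt
    have hgc : ContinuousOn g (Set.Icc 0 T) := by
      intro x hx
      exact (((hbC x hx.1).mul ((Real.continuous_exp.continuousAt).comp
        (((hI x).continuousAt).neg))).continuousWithinAt)
    have := constant_of_has_deriv_right_zero hgc hgd T ⟨hT, le_refl T⟩
    have hI0 : I 0 = 0 := by simp [hIdef]
    have hg0 : g 0 = b 0 := by simp [hg, hI0]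
    have hgT : b T * Real.exp (-(I T)) = b 0 := by rw [← hg0]; exact this
    nlinarith [Real.exp_pos (-(I T)), hgT]
  intro t ht
  refine ⟨⟨?_, ?_⟩, hbnn t ht⟩
  · -- lower bound: s t ≥ 0
    have hsc : ContinuousOn s (Set.Icc 0 t) := fun x hx => (hsC x hx.1).continuousWithinAt
    have hbc : ContinuousOn b (Set.Icc 0 t) := fun x hx => (hbC x hx.1).continuousWithinAt
    obtain ⟨C₁, hC₁⟩ := (isCompact_Icc : IsCompact (Set.Icc (0:ℝ) t)).exists_bound_of_continuousOn hsc
    obtain ⟨C₂, hC₂⟩ := (isCompact_Icc : IsCompact (Set.Icc (0:ℝ) t)).exists_bound_of_continuousOn hbc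
    set M := max C₁ 0 with hM
    set B := max C₂ 0 with hB
    have hM0 : 0 ≤ M := le_max_right _ _
    have hB0 : 0 ≤ B := le_max_right _ _
    have hsM : ∀ x ∈ Set.Icc (0:ℝ) t, s x ∈ Set.Icc (-M) M := by
      intro x hx
      have := hC₁ x hx
      have h2 : |s x| ≤ M := le_trans (by simpa using this) (le_max_left _ _)
      exact ⟨neg_le_of_abs_le h2, le_of_abs_le h2⟩
    have hbB : ∀ x ∈ Set.Icc (0:ℝ) t, b x ≤ B := by
      intro x hx
      have := hC₂ x hx
      exact le_trans (le_of_abs_le (by simpa using this)) (le_max_left _ _)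
    have hdμ : Continuous (deriv μ) := hμ.continuous_deriv le_rfl
    obtain ⟨L₀, hL₀⟩ := (isCompact_Icc : IsCompact (Set.Icc (-M) M)).exists_bound_of_continuousOn
      hdμ.continuousOn
    set L := max L₀ 0 with hL
    have hL0 : 0 ≤ L := le_max_right _ _
    have hlip : ∀ y ∈ Set.Icc (-M) M, |μ y| ≤ L * |y| := by
      intro y hy
      have h0mem : (0:ℝ) ∈ Set.Icc (-M) M := ⟨neg_nonpos_of_nonneg hM0, hM0⟩
      have := (convex_Icc (-M) M).norm_image_sub_le_of_norm_deriv_le (C := L)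
        (fun x _ => hμ.differentiable one_ne_zero x)
        (fun x hx => le_trans (hL₀ x hx) (le_max_left L₀ 0)) h0mem hy
      simpa [hμ0] using this
    have key := gron (fun x => -(s x))
      (fun x => -(-(μ (s x)) * b x + u x * (s_in - s x))) (L * B) t
      (fun x hx => ((hsol x hx.1).1).neg)
      ?_ (by simp only [neg_nonpos]; exact hs0.1) t ⟨ht, le_refl t⟩
    · simpa using key
    · intro x hx hvx
      simp only [neg_nonneg] at hvx
      have hsx : s x ≤ 0 := hvx
      have hux : 0 ≤ u x := hunonneg x hx.1
      have hterm : 0 ≤ u x * (s_in - s x) := mul_nonneg hux (by linarith)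
      have hbx0 : 0 ≤ b x := hbnn x hx.1
      have hbxB : b x ≤ B := hbB x hx
      have hμle : μ (s x) ≤ L * (-(s x)) := by
        have := hlip (s x) (hsM x hx)
        have habs : |s x| = -(s x) := abs_of_nonpos hsx
        calc μ (s x) ≤ |μ (s x)| := le_abs_self _
          _ ≤ L * |s x| := this
          _ = L * (-(s x)) := by rw [habs]
      have h1 : μ (s x) * b x ≤ L * (-(s x)) * b x :=
        mul_le_mul_of_nonneg_right hμle hbx0
      have h2 : L * (-(s x)) * b x ≤ L * (-(s x)) * B :=
        mul_le_mul_of_nonneg_left hbxB (mul_nonneg hL0 (by linarith))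
      show -(-(μ (s x)) * b x + u x * (s_in - s x)) ≤ L * B * -s x
      nlinarith
  · -- upper bound: s t ≤ s_in
    have key := gron (fun x => s x - s_in)
      (fun x => -(μ (s x)) * b x + u x * (s_in - s x)) 0 t
      (fun x hx => ((hsol x hx.1).1).sub_const s_in)
      ?_ (by simp only [sub_nonpos]; exact hs0.2) t ⟨ht, le_refl t⟩
    · have : s t - s_in ≤ 0 := key
      linarith
    · intro x hx hvx
      simp only [sub_nonneg] at hvx
      have hsx : s_in ≤ s x := hvx
      have h1 : 0 ≤ μ (s x) * b x :=
        mul_nonneg (hμnonneg (s x) (by linarith)) (hbnn x hx.1)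
      have h2 : u x * (s_in - s x) ≤ 0 :=
        mul_nonpos_of_nonneg_of_nonpos (hunonneg x hx.1) (by linarith)
      show -(μ (s x)) * b x + u x * (s_in - s x) ≤ 0 * (s x - s_in)
      nlinarith
end

section
/- Let s̄ ∈ (0, s_in), 0 < D_min < μ(s̄) < D_max, G2 > 0, and G1 > −μ'(s̄). Then the equilibrium (s̄, s_in − s̄, μ(s̄)) of the extended closed-loop system (chemostat with dynamic feedback) is locally exponentially stable: there exist δ > 0, C ≥ 1 and λ > 0 such that every solution t ↦ (s(t), b(t), D̄(t)) of the extended closed-loop system with initial condition within distance δ of (s̄, s_in − s̄, μ(s̄)) satisfies ‖(s(t), b(t), D̄(t)) − (s̄, s_in − s̄, μ(s̄))‖ ≤ C·e^{−λt}·‖(s(0), b(0), D̄(0)) − (s̄, s_in − s̄, μ(s̄))‖ for all t ≥ 0; in particular D̄(t) → μ(s̄) as t → ∞. -/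
set_option maxHeartbeats 4000000
open Real Filter

lemma sat_lo {Dmin Dmax : ℝ} (h : Dmin ≤ Dmax) (ξ : ℝ) : Dmin ≤ sat Dmin Dmax ξ := by
  unfold sat; split_ifs <;> linarith

lemma sat_hi {Dmin Dmax : ℝ} (h : Dmin ≤ Dmax) (ξ : ℝ) : sat Dmin Dmax ξ ≤ Dmax := by
  unfold sat; split_ifs <;> linarith

lemma sat_eq_self {Dmin Dmax ξ : ℝ} (h1 : Dmin ≤ ξ) (h2 : ξ ≤ Dmax) : sat Dmin Dmax ξ = ξ := by
  unfold sat; split_ifs <;> linarith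

lemma quad_lower (p q r x w : ℝ) (hp : 0 < p) (hr : r^2 ≤ p*q) : 2*r*(x*w) ≤ p*x^2 + q*w^2 := by
  have hid : p*(p*x^2 + q*w^2 - 2*r*(x*w)) = (p*x - r*w)^2 + (p*q - r^2)*w^2 := by ring
  have hnn : 0 ≤ p*(p*x^2 + q*w^2 - 2*r*(x*w)) := by
    rw [hid]; exact add_nonneg (sq_nonneg _) (mul_nonneg (by linarith) (sq_nonneg _))
  have := (mul_nonneg_iff_of_pos_left hp).mp hnn
  linarith


lemma sq_le_of_abs_le' {x r : ℝ} (h : |x| ≤ r) : x^2 ≤ r^2 := by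
  nlinarith [sq_abs x, abs_nonneg x]

lemma abs_le_of_sq_le' {x r : ℝ} (hr : 0 ≤ r) (h : x^2 ≤ r^2) : |x| ≤ r := by
  nlinarith [sq_abs x, abs_nonneg x]

lemma sq_lt_sq_aux' {x r : ℝ} (h0 : 0 ≤ x) (h : x < r) : x^2 < r^2 := by nlinarith

lemma Wlb_aux (γ β η M x w e : ℝ) (hM : 0 ≤ M) (hγ : 0 < γ) (hβ : 0 < β)
    (hηsq : η^2 ≤ γ*β/4) :
    (γ/2)*x^2 + (β/2)*w^2 + M*(e^2) ≤ γ*(x*x) + β*(w*w) - 2*η*(x*w) + M*(e*e) := by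
  have := quad_lower (γ/2) (β/2) η x w (by positivity) (by nlinarith)
  nlinarith

lemma Wub_aux (γ β η M x w e : ℝ) (hγ : 0 < γ) (hβ : 0 < β) (hηsq : η^2 ≤ γ*β/4) :
    γ*(x*x) + β*(w*w) - 2*η*(x*w) + M*(e*e) ≤ (3*γ/2)*x^2 + (3*β/2)*w^2 + M*(e^2) := by
  have := quad_lower (γ/2) (β/2) η x (-w) (by positivity) (by nlinarith)
  nlinarith

lemma nonneg3_aux (a b c x y z : ℝ) (ha : 0 ≤ a) (hb : 0 ≤ b) (hc : 0 ≤ c) :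
    0 ≤ a*x^2 + b*y^2 + c*z^2 := by positivity

lemma W0_aux (γ β M x2 w2 e2 N2 : ℝ) (hγ : 0 < γ) (hβ : 0 < β) (hM : 0 < M)
    (h1 : x2 ≤ N2) (h2 : w2 ≤ N2) (h3 : e2 ≤ 4*N2) :
    (3*γ/2)*x2 + (3*β/2)*w2 + M*e2 ≤ (3*γ/2 + 3*β/2 + 4*M)*N2 := by nlinarith

lemma comp_bound_aux (c₁ γ β M x2 w2 e2 Wt R2 : ℝ) (hc₁pos : 0 < c₁)
    (h1 : c₁ ≤ γ/2) (h2 : c₁ ≤ β/2) (h3 : c₁ ≤ M)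
    (hx : 0 ≤ x2) (hw : 0 ≤ w2) (he : 0 ≤ e2)
    (hlb : (γ/2)*x2 + (β/2)*w2 + M*e2 ≤ Wt) (hub : Wt ≤ c₁*R2) :
    x2 ≤ R2 ∧ w2 ≤ R2 ∧ e2 ≤ R2 := by
  have hx' := mul_le_mul_of_nonneg_right h1 hx
  have hw' := mul_le_mul_of_nonneg_right h2 hw
  have he' := mul_le_mul_of_nonneg_right h3 he
  refine ⟨?_, ?_, ?_⟩ <;>
  · rw [← mul_le_mul_iff_right₀ hc₁pos]
    nlinarith
lemma deriv_nonpos_aux (Wd Wt lam1 E : ℝ) (hE : 0 < E) (hk : Wd ≤ -lam1*Wt) :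
    Wd * E + Wt * (E * lam1) ≤ 0 := by nlinarith

lemma inv_contra_aux (Wt W0 E cc : ℝ) (hWtnn : 0 ≤ Wt) (hE : 1 ≤ E)
    (h1 : Wt*E ≤ W0) (h2 : cc ≤ Wt) (h3 : W0 < cc) : False := by nlinarith


lemma Bterm_aux (Mv u Dmin E : ℝ) (hM : 0 < Mv) (hu : Dmin ≤ u) :
    2*Mv*(E*(-u*E)) ≤ -2*Mv*Dmin*E^2 := by
  nlinarith [mul_nonneg (mul_nonneg (le_of_lt hM) (sub_nonneg.mpr hu)) (sq_nonneg E)]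

lemma R1_bound_aux (a β ε₀ Mμ ρ X Wv E r mu : ℝ) (hapos : 0 < a) (hβpos : 0 < β)
    (hX : |X| ≤ ρ) (hW : |Wv| ≤ ρ) (hρ1 : ρ ≤ 1) (hρpos : 0 < ρ)
    (hr : |r| ≤ ε₀* |X|) (hε₀pos : 0 < ε₀) (hmu : |mu| ≤ Mμ) :
    |(-(X*Wv) + a*X^2 - (β - X)*r - mu*E)| ≤
      (1+a)*ρ*(|X| + |Wv|) + (β+1)*(ε₀* |X|) + Mμ* |E| := by
  have t1 : |X*Wv| ≤ ρ* |Wv| := by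
    rw [abs_mul]; exact mul_le_mul_of_nonneg_right hX (abs_nonneg _)
  have t2 : |a*X^2| ≤ a*(ρ* |X|) := by
    rw [abs_mul, abs_of_pos hapos]
    apply mul_le_mul_of_nonneg_left _ (le_of_lt hapos)
    rw [abs_of_nonneg (sq_nonneg X), ← sq_abs X]
    nlinarith [abs_nonneg X]
  have t3 : |(β - X)*r| ≤ (β+1)*(ε₀* |X|) := by
    rw [abs_mul]
    apply mul_le_mul _ hr (abs_nonneg r) (by linarith)
    calc |β - X| ≤ |β| + |X| := abs_sub _ _
    _ ≤ β + 1 := by rw [abs_of_pos hβpos]; linarith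
  have t4 : |mu*E| ≤ Mμ* |E| := by
    rw [abs_mul]; exact mul_le_mul_of_nonneg_right hmu (abs_nonneg E)
  have c1 : |(-(X*Wv) + a*X^2 - (β - X)*r - mu*E)| ≤
      |(-(X*Wv) + a*X^2 - (β - X)*r)| + |mu*E| := abs_sub _ _
  have c2 : |(-(X*Wv) + a*X^2 - (β - X)*r)| ≤ |(-(X*Wv) + a*X^2)| + |(β - X)*r| := abs_sub _ _
  have c3 : |(-(X*Wv) + a*X^2)| ≤ |X*Wv| + |a*X^2| := by
    calc |(-(X*Wv) + a*X^2)| ≤ |(-(X*Wv))| + |a*X^2| := abs_add_le _ _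
    _ = |X*Wv| + |a*X^2| := by rw [abs_neg]
  have hnn1 : 0 ≤ ρ* |X| := mul_nonneg (le_of_lt hρpos) (abs_nonneg X)
  have hnn2 : 0 ≤ a*(ρ* |Wv|) := mul_nonneg (le_of_lt hapos)
    (mul_nonneg (le_of_lt hρpos) (abs_nonneg Wv))
  nlinarith [t1, t2, t3, t4, c1, c2, c3]

lemma R2_bound_aux (G2 k ρ X Wv : ℝ) (hG2 : 0 < G2) (hX : |X| ≤ ρ) (hW : |Wv| ≤ ρ)
    (hρ1 : ρ ≤ 1) (hρpos : 0 < ρ) :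
    |(-G2*X*(k*Wv - Wv^2))| ≤ G2*(|k|+1)*ρ* |X| := by
  rw [abs_mul, abs_mul, abs_neg, abs_of_pos hG2]
  have h1 : |k*Wv - Wv^2| ≤ (|k|+1)*ρ := by
    have e1 : |k*Wv| = |k| * |Wv| := abs_mul _ _
    have e2 : |Wv^2| = |Wv| * |Wv| := by
      rw [abs_of_nonneg (sq_nonneg Wv), ← sq_abs Wv]; ring
    have := abs_sub (k*Wv) (Wv^2)
    nlinarith [abs_nonneg k, abs_nonneg Wv, mul_le_mul_of_nonneg_left hW (abs_nonneg k)]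
  calc G2* |X| * |k*Wv - Wv^2| ≤ G2* |X| *((|k|+1)*ρ) := by
        apply mul_le_mul_of_nonneg_left h1
        exact mul_nonneg (le_of_lt hG2) (abs_nonneg X)
  _ = G2*(|k|+1)*ρ* |X| := by ring

lemma mu_bound_aux (Db m ε₀ ρ X r mu Mμ : ℝ) (hmu : mu = Db + m*X + r)
    (hMμ : Mμ = Db + |m| + 1) (hDb : 0 < Db) (hX : |X| ≤ ρ) (hρ1 : ρ ≤ 1)
    (hr : |r| ≤ ε₀* |X|) (hε₀1 : ε₀ ≤ 1) (hε₀ : 0 < ε₀) : |mu| ≤ Mμ := by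
  have h1 : |m*X| ≤ |m| := by
    rw [abs_mul]
    calc |m| * |X| ≤ |m| *1 := mul_le_mul_of_nonneg_left (le_trans hX hρ1) (abs_nonneg m)
    _ = |m| := mul_one _
  have h2 : |r| ≤ 1 := by
    have : ε₀* |X| ≤ 1 := by nlinarith [abs_nonneg X]
    linarith
  calc |mu| = |Db + m*X + r| := by rw [hmu]
  _ ≤ |Db + m*X| + |r| := abs_add_le _ _
  _ ≤ |Db| + |m*X| + |r| := by linarith [abs_add_le Db (m*X)]
  _ ≤ Db + |m| + 1 := by rw [abs_of_pos hDb]; linarith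
  _ = Mμ := hMμ.symm

lemma combine_aux (γ β η a ε₀ Mμ ν ρ K2 d X Wv E R1 R2 : ℝ)
    (hγ : 0 < γ) (hβ : 0 < β) (hη : 0 < η) (ha : 0 < a) (hν : 0 < ν) (hρ : 0 < ρ)
    (hε₀ : 0 < ε₀) (hMμ : 0 < Mμ) (hK2 : 0 < K2) (hdpos : 0 ≤ d)
    (hd : 2*ν*d = (γ+η)*Mμ)
    (hR1 : |R1| ≤ (1+a)*ρ*(|X| + |Wv|) + (β+1)*(ε₀* |X|) + Mμ* |E|)
    (hR2 : |R2| ≤ K2*ρ* |X|) :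
    (2*γ*X - 2*η*Wv)*R1 + (2*β*Wv - 2*η*X)*R2 ≤
      (ρ*(4*(γ+η)*(1+a) + 3*(β+η)*K2) + ε₀*(3*(γ+η)*(β+1)) + ν*(4*(γ+η)*Mμ))*(X^2 + Wv^2)
        + d*E^2 := by
  have hb1 : |2*γ*X - 2*η*Wv| ≤ 2*(γ+η)*(|X|+|Wv|) := by
    calc |2*γ*X - 2*η*Wv| ≤ |2*γ*X| + |2*η*Wv| := abs_sub _ _
    _ = 2*γ* |X| + 2*η* |Wv| := by
        rw [abs_mul (2*γ) X, abs_mul (2*η) Wv, abs_of_pos (by linarith : (0:ℝ) < 2*γ),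
          abs_of_pos (by linarith : (0:ℝ) < 2*η)]
    _ ≤ 2*(γ+η)*(|X|+|Wv|) := by
        nlinarith [mul_nonneg (le_of_lt hγ) (abs_nonneg Wv), mul_nonneg (le_of_lt hη) (abs_nonneg X)]
  have hb2 : |2*β*Wv - 2*η*X| ≤ 2*(β+η)*(|X|+|Wv|) := by
    calc |2*β*Wv - 2*η*X| ≤ |2*β*Wv| + |2*η*X| := abs_sub _ _
    _ = 2*β* |Wv| + 2*η* |X| := by
        rw [abs_mul (2*β) Wv, abs_mul (2*η) X, abs_of_pos (by linarith : (0:ℝ) < 2*β),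
          abs_of_pos (by linarith : (0:ℝ) < 2*η)]
    _ ≤ 2*(β+η)*(|X|+|Wv|) := by
        nlinarith [mul_nonneg (le_of_lt hβ) (abs_nonneg X), mul_nonneg (le_of_lt hη) (abs_nonneg Wv)]
  have t1 : (2*γ*X - 2*η*Wv)*R1 ≤ (2*(γ+η)*(|X|+|Wv|))* |R1| := by
    calc (2*γ*X - 2*η*Wv)*R1 ≤ |(2*γ*X - 2*η*Wv)*R1| := le_abs_self _
    _ = |2*γ*X - 2*η*Wv| * |R1| := abs_mul _ _
    _ ≤ (2*(γ+η)*(|X|+|Wv|))* |R1| := mul_le_mul_of_nonneg_right hb1 (abs_nonneg _)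
  have t2 : (2*β*Wv - 2*η*X)*R2 ≤ (2*(β+η)*(|X|+|Wv|))* |R2| := by
    calc (2*β*Wv - 2*η*X)*R2 ≤ |(2*β*Wv - 2*η*X)*R2| := le_abs_self _
    _ = |2*β*Wv - 2*η*X| * |R2| := abs_mul _ _
    _ ≤ (2*(β+η)*(|X|+|Wv|))* |R2| := mul_le_mul_of_nonneg_right hb2 (abs_nonneg _)
  have hSnn : 0 ≤ |X|+|Wv| := by positivity
  have p1 : (2*(γ+η)*(|X|+|Wv|))* |R1| ≤
      (2*(γ+η)*(|X|+|Wv|))*((1+a)*ρ*(|X| + |Wv|) + (β+1)*(ε₀* |X|) + Mμ* |E|) :=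
    mul_le_mul_of_nonneg_left hR1 (by positivity)
  have p2 : (2*(β+η)*(|X|+|Wv|))* |R2| ≤ (2*(β+η)*(|X|+|Wv|))*(K2*ρ* |X|) :=
    mul_le_mul_of_nonneg_left hR2 (by positivity)
  have hf1 : (|X|+|Wv|)^2 ≤ 2*(X^2+Wv^2) := by
    nlinarith [sq_nonneg (|X|-|Wv|), sq_abs X, sq_abs Wv]
  have hf2 : (|X|+|Wv|)* |X| ≤ (3/2)*(X^2+Wv^2) := by
    nlinarith [sq_nonneg (|X|-|Wv|), sq_abs X, sq_abs Wv]
  have hf3 : 4*ν*((|X|+|Wv|)* |E|) ≤ 8*(ν*ν)*(X^2+Wv^2) + E^2 := by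
    nlinarith [sq_nonneg (2*ν*(|X|+|Wv|) - |E|), sq_abs E,
      mul_le_mul_of_nonneg_left hf1 (by positivity : (0:ℝ) ≤ 4*(ν*ν))]
  have f1s := mul_le_mul_of_nonneg_left hf1
    (by positivity : (0:ℝ) ≤ 2*(γ+η)*((1+a)*ρ))
  have f2s := mul_le_mul_of_nonneg_left hf2
    (by positivity : (0:ℝ) ≤ 2*(γ+η)*((β+1)*ε₀))
  have f2s' := mul_le_mul_of_nonneg_left hf2
    (by positivity : (0:ℝ) ≤ 2*(β+η)*(K2*ρ))
  have f3s := mul_le_mul_of_nonneg_left hf3 hdpos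
  have hdm : (2*ν*d)*((|X|+|Wv|)* |E|) = ((γ+η)*Mμ)*((|X|+|Wv|)* |E|) := by rw [hd]
  have hdm2 : (2*ν*d)*(ν*(X^2+Wv^2)) = ((γ+η)*Mμ)*(ν*(X^2+Wv^2)) := by rw [hd]
  linarith [t1, t2, p1, p2, f1s, f2s, f2s', f3s, hdm, hdm2]

lemma final_aux (lam0 lam1 γ β M Dmin X Wv E Wt : ℝ)
    (h1 : lam1*(3*γ/2) ≤ lam0/4) (h2 : lam1*(3*β/2) ≤ lam0/4) (h3 : lam1 ≤ Dmin)
    (hl : 0 < lam1) (hM : 0 < M)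
    (hub : Wt ≤ (3*γ/2)*X^2 + (3*β/2)*Wv^2 + M*E^2) :
    -(lam0/4)*(X^2+Wv^2) - M*Dmin*E^2 ≤ -lam1*Wt := by
  have e0 := mul_le_mul_of_nonneg_left hub (le_of_lt hl)
  have e1 := mul_le_mul_of_nonneg_right h1 (sq_nonneg X)
  have e2 := mul_le_mul_of_nonneg_right h2 (sq_nonneg Wv)
  have e3 : lam1*M*E^2 ≤ Dmin*M*E^2 :=
    mul_le_mul_of_nonneg_right (mul_le_mul_of_nonneg_right h3 (le_of_lt hM)) (sq_nonneg E)
  nlinarith [e0, e1, e2, e3]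

set_option maxHeartbeats 4000000 in
/-- Local exponential stability of the equilibrium `(s̄, s_in - s̄, μ(s̄))` of the
extended closed-loop system (chemostat with dynamic feedback), Proposition 2. -/
theorem stmt_10
    (μ : ℝ → ℝ) (s_in Dmin Dmax sbar G1 G2 : ℝ)
    (hμ : ContDiff ℝ 1 μ) (hμ0 : μ 0 = 0)
    (hμpos : ∀ x ∈ Set.Ioc 0 s_in, 0 < μ x) (hsin : 0 < s_in)
    (hsbar : sbar ∈ Set.Ioo 0 s_in)
    (hDmin : 0 < Dmin) (hlow : Dmin < μ sbar) (hup : μ sbar < Dmax)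
    (hG2 : 0 < G2) (hG1 : -deriv μ sbar < G1) :
    ∃ δ > (0:ℝ), ∃ C ≥ (1:ℝ), ∃ lam > (0:ℝ),
      ∀ s b D : ℝ → ℝ,
        (∀ t ≥ (0:ℝ),
          HasDerivAt s
            (-(μ (s t)) * b t
              + sat Dmin Dmax (D t - G1 * (s t - sbar)) * (s_in - s t)) t ∧
          HasDerivAt b
            (μ (s t) * b t
              - sat Dmin Dmax (D t - G1 * (s t - sbar)) * b t) t ∧
          HasDerivAt D
            (-G2 * (s t - sbar) * (D t - Dmin) * (Dmax - D t)) t) →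
        ‖((s 0, b 0, D 0) : ℝ × ℝ × ℝ) - (sbar, s_in - sbar, μ sbar)‖ < δ →
        (∀ t ≥ (0:ℝ),
          ‖((s t, b t, D t) : ℝ × ℝ × ℝ) - (sbar, s_in - sbar, μ sbar)‖
            ≤ C * Real.exp (-lam * t) *
              ‖((s 0, b 0, D 0) : ℝ × ℝ × ℝ) - (sbar, s_in - sbar, μ sbar)‖) ∧
        Filter.Tendsto D Filter.atTop (nhds (μ sbar)) := by
  obtain ⟨hsbar0, hsbar1⟩ := hsbar
  obtain ⟨Db, hDb⟩ : ∃ x, x = μ sbar := ⟨_, rfl⟩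
  obtain ⟨β, hβ⟩ : ∃ x, x = s_in - sbar := ⟨_, rfl⟩
  have hβpos : 0 < β := by rw [hβ]; linarith
  obtain ⟨m, hm⟩ : ∃ x, x = deriv μ sbar := ⟨_, rfl⟩
  obtain ⟨a, ha⟩ : ∃ x, x = G1 + m := ⟨_, rfl⟩
  have hapos : 0 < a := by rw [ha, hm]; linarith
  obtain ⟨α, hα⟩ : ∃ x, x = β * a := ⟨_, rfl⟩
  have hαpos : 0 < α := by rw [hα]; exact mul_pos hβpos hapos
  obtain ⟨γ, hγ⟩ : ∃ x, x = G2 * ((Db - Dmin) * (Dmax - Db)) := ⟨_, rfl⟩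
  have hγpos : 0 < γ := by
    rw [hγ]; apply mul_pos hG2; apply mul_pos <;> rw [hDb] <;> linarith
  obtain ⟨η, hη⟩ : ∃ x, x = min (α/2) (γ*β/(2*α)) := ⟨_, rfl⟩
  have hηpos : 0 < η := by rw [hη]; apply lt_min (by linarith); positivity
  have hη1 : η ≤ α/2 := hη ▸ min_le_left _ _
  have hη2 : 2*α*η ≤ γ*β := by
    have h := hη ▸ min_le_right (α/2) (γ*β/(2*α))
    calc 2*α*η ≤ 2*α*(γ*β/(2*α)) := by nlinarith
    _ = γ*β := by field_simp
  have hηsq : η^2 ≤ γ*β/4 := by nlinarith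
  obtain ⟨P, hP⟩ : ∃ x, x = γ*(α-η) := ⟨_, rfl⟩
  obtain ⟨Q, hQ⟩ : ∃ x, x = η*β := ⟨_, rfl⟩
  have hPpos : 0 < P := by rw [hP]; apply mul_pos hγpos; linarith
  have hQpos : 0 < Q := hQ ▸ mul_pos hηpos hβpos
  have hPQ : (η*α)^2 ≤ P*Q := by
    have h₁ : η*α ≤ γ*β/2 := by linarith
    have h₂ : (η*α)^2 ≤ (γ*β/2)*(η*α) := by nlinarith [mul_pos hηpos hαpos]
    have h₃ : (γ*β/2)*(η*α) ≤ P*Q := by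
      rw [hP, hQ]
      nlinarith [mul_pos (mul_pos hγpos hηpos) hβpos, hη1]
    linarith
  obtain ⟨lam0, hlam0⟩ : ∃ x, x = min P Q := ⟨_, rfl⟩
  have hlam0pos : 0 < lam0 := hlam0 ▸ lt_min hPpos hQpos
  have hquad : ∀ X Wv : ℝ, -2*P*X^2 + 2*η*α*(X*Wv) - 2*Q*Wv^2 ≤ -lam0*(X^2+Wv^2) := by
    intro X Wv
    have hkey : (0:ℝ) ≤ P*Q - (η*α)^2 := by linarith
    have hid : P*(P*X^2 + Q*Wv^2 - 2*η*α*(X*Wv)) = (P*X - η*α*Wv)^2 + (P*Q - (η*α)^2)*Wv^2 := by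
      ring
    have hnn : 0 ≤ P*(P*X^2 + Q*Wv^2 - 2*η*α*(X*Wv)) := by
      rw [hid]; exact add_nonneg (sq_nonneg _) (mul_nonneg hkey (sq_nonneg _))
    have h1 : 2*η*α*(X*Wv) ≤ P*X^2 + Q*Wv^2 := by
      have := (mul_nonneg_iff_of_pos_left hPpos).mp hnn
      linarith
    have h2 : lam0 ≤ P := hlam0 ▸ min_le_left _ _
    have h3 : lam0 ≤ Q := hlam0 ▸ min_le_right _ _
    have e2 : lam0*X^2 ≤ P*X^2 := mul_le_mul_of_nonneg_right h2 (sq_nonneg X)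
    have e3 : lam0*Wv^2 ≤ Q*Wv^2 := mul_le_mul_of_nonneg_right h3 (sq_nonneg Wv)
    linarith
  -- remainder / size constants
  obtain ⟨Mμ, hMμ⟩ : ∃ x, x = Db + |m| + 1 := ⟨_, rfl⟩
  have hMμpos : 0 < Mμ := by rw [hMμ, hDb]; have := abs_nonneg m; linarith
  obtain ⟨C4, hC4⟩ : ∃ x, x = 3*(γ+η)*(β+1) := ⟨_, rfl⟩
  have hC4pos : 0 < C4 := by
    rw [hC4]; exact mul_pos (by linarith) (by linarith)
  obtain ⟨ε₀, hε₀⟩ : ∃ x, x = min 1 (lam0/(4*C4)) := ⟨_, rfl⟩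
  have hε₀pos : 0 < ε₀ := by rw [hε₀]; exact lt_min one_pos (by positivity)
  have hε₀1 : ε₀ ≤ 1 := hε₀ ▸ min_le_left _ _
  have hε₀C4 : ε₀*C4 ≤ lam0/4 := by
    have h := hε₀ ▸ min_le_right 1 (lam0/(4*C4))
    have h2 : (lam0/(4*C4))*C4 = lam0/4 := by field_simp
    calc ε₀*C4 ≤ (lam0/(4*C4))*C4 := mul_le_mul_of_nonneg_right h (le_of_lt hC4pos)
    _ = lam0/4 := h2
  -- continuity of deriv μ at sbar
  have hcd : Continuous (deriv μ) := hμ.continuous_deriv le_rfl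
  obtain ⟨ρ₁, hρ₁pos, hρ₁⟩ : ∃ r > 0, ∀ z, |z - sbar| ≤ r → |deriv μ z - m| ≤ ε₀ := by
    obtain ⟨d, hdpos, hd⟩ := Metric.continuousAt_iff.mp hcd.continuousAt ε₀ hε₀pos
    refine ⟨d/2, by linarith, fun z hz => ?_⟩
    have : dist z sbar < d := by rw [Real.dist_eq]; linarith
    have := hd this
    rw [Real.dist_eq] at this
    rw [hm]; linarith [le_of_lt this]
  have hmvt : ∀ z, |z - sbar| ≤ ρ₁ → |μ z - Db - m*(z - sbar)| ≤ ε₀* |z - sbar| := by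
    intro z hz
    have hconv : Convex ℝ (Set.Icc (sbar - ρ₁) (sbar + ρ₁)) := convex_Icc _ _
    have hder : ∀ y ∈ Set.Icc (sbar - ρ₁) (sbar + ρ₁),
        HasDerivWithinAt (fun y => μ y - m*y) (deriv μ y - m) (Set.Icc (sbar - ρ₁) (sbar + ρ₁)) y := by
      intro y _
      have h1 : HasDerivAt (fun y => μ y - m*y) (deriv μ y - m) y := by
        exact (((hμ.differentiable one_ne_zero) y).hasDerivAt.sub ((hasDerivAt_id y).const_mul m)).congr_deriv (by ring)
      exact h1.hasDerivWithinAt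
    have hbd : ∀ y ∈ Set.Icc (sbar - ρ₁) (sbar + ρ₁), ‖deriv μ y - m‖ ≤ ε₀ := by
      intro y hy
      rw [Real.norm_eq_abs]
      exact hρ₁ y (abs_le.mpr ⟨by linarith [hy.1], by linarith [hy.2]⟩)
    have hzmem : z ∈ Set.Icc (sbar - ρ₁) (sbar + ρ₁) := by
      rcases abs_le.mp hz with ⟨h1, h2⟩
      exact ⟨by linarith, by linarith⟩
    have hsmem : sbar ∈ Set.Icc (sbar - ρ₁) (sbar + ρ₁) := by
      constructor <;> linarith
    have := Convex.norm_image_sub_le_of_norm_hasDerivWithin_le hder hbd hconv hsmem hzmem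
    rw [Real.norm_eq_abs, Real.norm_eq_abs] at this
    have heq : μ z - Db - m*(z - sbar) = (μ z - m*z) - (μ sbar - m*sbar) := by rw [hDb]; ring
    rw [heq]; exact this
  obtain ⟨C5, hC5⟩ : ∃ x, x = 4*(γ+η)*Mμ := ⟨_, rfl⟩
  have hC5pos : 0 < C5 := by
    rw [hC5]; exact mul_pos (by linarith) hMμpos
  obtain ⟨ν, hν⟩ : ∃ x, x = lam0/(4*C5) := ⟨_, rfl⟩
  have hνpos : 0 < ν := by rw [hν]; positivity
  have hνC5 : ν*C5 ≤ lam0/4 := by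
    rw [hν]
    have : lam0/(4*C5)*C5 = lam0/4 := by field_simp
    rw [this]
  obtain ⟨C6, hC6⟩ : ∃ x, x = (γ+η)*Mμ/(2*ν) := ⟨_, rfl⟩
  have hC6pos : 0 < C6 := by rw [hC6]; positivity
  obtain ⟨M, hM⟩ : ∃ x, x = C6/Dmin + 1 := ⟨_, rfl⟩
  have hMpos : 0 < M := by rw [hM]; positivity
  have hC6M : C6 ≤ Dmin*M := by
    rw [hM]
    have : Dmin*(C6/Dmin + 1) = C6 + Dmin := by field_simp
    rw [this]; linarith
  obtain ⟨K2, hK2⟩ : ∃ x, x = G2*(|Dmax + Dmin - 2*Db| + 1) := ⟨_, rfl⟩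
  have hK2pos : 0 < K2 := by
    rw [hK2]; exact mul_pos hG2 (by linarith [abs_nonneg (Dmax + Dmin - 2*Db)])
  obtain ⟨C3, hC3⟩ : ∃ x, x = 4*(γ+η)*(1+a) + 3*(β+η)*K2 := ⟨_, rfl⟩
  have hC3pos : 0 < C3 := by
    rw [hC3]
    have h1 : 0 < 4*(γ+η)*(1+a) := mul_pos (by linarith) (by linarith)
    have h2 : 0 < 3*(β+η)*K2 := mul_pos (by linarith) hK2pos
    linarith
  obtain ⟨dsat, hdsat⟩ : ∃ x, x = min (Db - Dmin) (Dmax - Db) := ⟨_, rfl⟩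
  have hdsatpos : 0 < dsat := by
    rw [hdsat]; apply lt_min <;> rw [hDb] <;> linarith
  have hdsat1 : dsat ≤ Db - Dmin := hdsat ▸ min_le_left _ _
  have hdsat2 : dsat ≤ Dmax - Db := hdsat ▸ min_le_right _ _
  obtain ⟨ρ, hρdef⟩ : ∃ x, x = min (min 1 ρ₁) (min (dsat/(1+|G1|)) (lam0/(4*C3))) := ⟨_, rfl⟩
  have hG1abs : (0:ℝ) < 1 + |G1| := by have := abs_nonneg G1; linarith
  have hρpos : 0 < ρ := by
    rw [hρdef]
    apply lt_min (lt_min one_pos hρ₁pos)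
    apply lt_min (by positivity) (by positivity)
  have hρ1 : ρ ≤ 1 := le_trans (hρdef ▸ min_le_left _ _) (min_le_left _ _)
  have hρρ₁ : ρ ≤ ρ₁ := le_trans (hρdef ▸ min_le_left _ _) (min_le_right _ _)
  have hρsat : ρ*(1+|G1|) ≤ dsat := by
    have h := le_trans (hρdef ▸ min_le_right _ _) (min_le_left _ _)
    have h2 : (dsat/(1+|G1|))*(1+|G1|) = dsat := by field_simp
    calc ρ*(1+|G1|) ≤ (dsat/(1+|G1|))*(1+|G1|) := mul_le_mul_of_nonneg_right h (le_of_lt hG1abs)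
    _ = dsat := h2
  have hρC3 : ρ*C3 ≤ lam0/4 := by
    have h := le_trans (hρdef ▸ min_le_right _ _) (min_le_right _ _)
    have h2 : (lam0/(4*C3))*C3 = lam0/4 := by field_simp
    calc ρ*C3 ≤ (lam0/(4*C3))*C3 := mul_le_mul_of_nonneg_right h (le_of_lt hC3pos)
    _ = lam0/4 := h2
  obtain ⟨lam1, hlam1⟩ : ∃ x, x = min (min (lam0/(6*γ)) (lam0/(6*β))) Dmin := ⟨_, rfl⟩
  have hlam1pos : 0 < lam1 := by
    rw [hlam1]
    apply lt_min (lt_min (by positivity) (by positivity)) hDmin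
  have hlam1γ : lam1*(3*γ/2) ≤ lam0/4 := by
    have h := le_trans (hlam1 ▸ min_le_left _ _) (min_le_left _ _)
    have h2 : (lam0/(6*γ))*(3*γ/2) = lam0/4 := by field_simp; ring
    calc lam1*(3*γ/2) ≤ (lam0/(6*γ))*(3*γ/2) := mul_le_mul_of_nonneg_right h (by linarith)
    _ = lam0/4 := h2
  have hlam1β : lam1*(3*β/2) ≤ lam0/4 := by
    have h := le_trans (hlam1 ▸ min_le_left _ _) (min_le_right _ _)
    have h2 : (lam0/(6*β))*(3*β/2) = lam0/4 := by field_simp; ring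
    calc lam1*(3*β/2) ≤ (lam0/(6*β))*(3*β/2) := mul_le_mul_of_nonneg_right h (by linarith)
    _ = lam0/4 := h2
  have hlam1D : lam1 ≤ Dmin := hlam1 ▸ min_le_right _ _
  obtain ⟨c₁, hc₁⟩ : ∃ x, x = min (min (γ/2) (β/2)) M := ⟨_, rfl⟩
  have hc₁pos : 0 < c₁ := by
    rw [hc₁]; apply lt_min (lt_min (by positivity) (by positivity)) hMpos
  have hc₁γ : c₁ ≤ γ/2 := le_trans (hc₁ ▸ min_le_left _ _) (min_le_left _ _)
  have hc₁β : c₁ ≤ β/2 := le_trans (hc₁ ▸ min_le_left _ _) (min_le_right _ _)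
  have hc₁M : c₁ ≤ M := hc₁ ▸ min_le_right _ _
  obtain ⟨c₂, hc₂⟩ : ∃ x, x = 3*γ/2 + 3*β/2 + 4*M := ⟨_, rfl⟩
  have hc₂pos : 0 < c₂ := by rw [hc₂]; positivity
  have hc₁c₂ : c₁ ≤ c₂ := by rw [hc₂]; linarith
  obtain ⟨cc, hcc⟩ : ∃ x, x = c₁*ρ^2 := ⟨_, rfl⟩
  have hccpos : 0 < cc := by rw [hcc]; positivity
  obtain ⟨δ, hδdef⟩ : ∃ x, x = ρ * Real.sqrt (c₁/c₂) := ⟨_, rfl⟩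
  have hδpos : 0 < δ := by rw [hδdef]; positivity
  have hδ2 : c₂*δ^2 = c₁*ρ^2 := by
    rw [hδdef, mul_pow, sq_sqrt (by positivity : (0:ℝ) ≤ c₁/c₂)]
    field_simp
  obtain ⟨C, hCdef⟩ : ∃ x, x = 2*Real.sqrt (c₂/c₁) := ⟨_, rfl⟩
  have hC1 : 1 ≤ C := by
    rw [hCdef]
    have h1 : (1:ℝ) ≤ c₂/c₁ := (one_le_div hc₁pos).mpr hc₁c₂
    have h2 : (1:ℝ) ≤ Real.sqrt (c₂/c₁) := by
      rw [show (1:ℝ) = Real.sqrt 1 by simp]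
      exact Real.sqrt_le_sqrt h1
    linarith
  obtain ⟨lam, hlamdef⟩ : ∃ x, x = lam1/2 := ⟨_, rfl⟩
  have hlampos : 0 < lam := by rw [hlamdef]; positivity
  have hDmM : Dmin ≤ Dmax := by linarith
  refine ⟨δ, hδpos, C, hC1, lam, hlampos, ?_⟩
  intro s b D hsol hinit
  -- abbreviations for the right-hand sides
  obtain ⟨sd, hsd⟩ : ∃ f : ℝ → ℝ, ∀ τ, f τ =
      -(μ (s τ)) * b τ + sat Dmin Dmax (D τ - G1 * (s τ - sbar)) * (s_in - s τ) :=
    ⟨_, fun τ => rfl⟩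
  obtain ⟨bd, hbd⟩ : ∃ f : ℝ → ℝ, ∀ τ, f τ =
      μ (s τ) * b τ - sat Dmin Dmax (D τ - G1 * (s τ - sbar)) * b τ :=
    ⟨_, fun τ => rfl⟩
  obtain ⟨Dd, hDd⟩ : ∃ f : ℝ → ℝ, ∀ τ, f τ =
      -G2 * (s τ - sbar) * (D τ - Dmin) * (Dmax - D τ) := ⟨_, fun τ => rfl⟩
  obtain ⟨W, hWfun⟩ : ∃ f : ℝ → ℝ, f = fun τ =>
      γ * ((s τ - sbar) * (s τ - sbar)) + β * ((D τ - Db) * (D τ - Db)) -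
        2*η * ((s τ - sbar) * (D τ - Db)) +
        M * ((s τ + b τ - s_in) * (s τ + b τ - s_in)) := ⟨_, rfl⟩
  have hWt : ∀ τ, W τ = γ * ((s τ - sbar) * (s τ - sbar)) + β * ((D τ - Db) * (D τ - Db)) -
      2*η * ((s τ - sbar) * (D τ - Db)) +
      M * ((s τ + b τ - s_in) * (s τ + b τ - s_in)) := fun τ => by rw [hWfun]
  obtain ⟨Wd, hWddef⟩ : ∃ f : ℝ → ℝ, ∀ τ, f τ =
      2*γ*((s τ - sbar) * sd τ) + 2*β*((D τ - Db) * Dd τ) -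
        2*η*(sd τ * (D τ - Db) + (s τ - sbar) * Dd τ) +
        2*M*((s τ + b τ - s_in) * (sd τ + bd τ)) := ⟨_, fun τ => rfl⟩
  -- W is differentiable along the solution
  have hW : ∀ t, 0 ≤ t → HasDerivAt W (Wd t) t := by
    intro t ht
    obtain ⟨hs, hb, hD⟩ := hsol t ht
    have hxd : HasDerivAt (fun τ => s τ - sbar) (sd t) t := by
      rw [hsd]; exact hs.sub_const sbar
    have hwd : HasDerivAt (fun τ => D τ - Db) (Dd t) t := by
      rw [hDd]; exact hD.sub_const Db
    have hed : HasDerivAt (fun τ => s τ + b τ - s_in) (sd t + bd t) t := by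
      rw [hsd, hbd]; exact (hs.add hb).sub_const s_in
    have h1 := (hxd.mul hxd).const_mul γ
    have h2 := (hwd.mul hwd).const_mul β
    have h3 := (hxd.mul hwd).const_mul (2*η)
    have h4 := (hed.mul hed).const_mul M
    have hcomb := ((h1.add h2).sub h3).add h4
    rw [hWfun]
    exact hcomb.congr_deriv (by rw [hWddef t]; ring)
  -- bounds on W
  have hWlb : ∀ τ, (γ/2)*(s τ - sbar)^2 + (β/2)*(D τ - Db)^2 +
      M*(s τ + b τ - s_in)^2 ≤ W τ := by
    intro τ
    rw [hWt τ]
    exact Wlb_aux γ β η M _ _ _ (le_of_lt hMpos) hγpos hβpos hηsq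
  have hWub : ∀ τ, W τ ≤ (3*γ/2)*(s τ - sbar)^2 + (3*β/2)*(D τ - Db)^2 +
      M*(s τ + b τ - s_in)^2 := by
    intro τ
    rw [hWt τ]
    exact Wub_aux γ β η M _ _ _ hγpos hβpos hηsq
  have hWnonneg : ∀ τ, 0 ≤ W τ := by
    intro τ
    exact le_trans (nonneg3_aux (γ/2) (β/2) M _ _ _ (by positivity) (by positivity)
      (le_of_lt hMpos)) (hWlb τ)
  -- the key derivative estimate inside the sublevel set
  have hkey : ∀ t, 0 ≤ t → W t ≤ c₁*ρ^2 → Wd t ≤ -lam1 * W t := by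
    intro t ht hWle
    obtain ⟨X, hXdef⟩ : ∃ z, z = s t - sbar := ⟨_, rfl⟩
    obtain ⟨Wv, hWvdef⟩ : ∃ z, z = D t - Db := ⟨_, rfl⟩
    obtain ⟨E, hEdef⟩ : ∃ z, z = s t + b t - s_in := ⟨_, rfl⟩
    obtain ⟨hx2, hw2, he2⟩ := comp_bound_aux c₁ γ β M (X^2) (Wv^2) (E^2) (W t) (ρ^2)
      hc₁pos hc₁γ hc₁β hc₁M (sq_nonneg _) (sq_nonneg _) (sq_nonneg _)
      (by rw [hXdef, hWvdef, hEdef]; exact hWlb t) hWle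
    have hXρ : |X| ≤ ρ := abs_le_of_sq_le' (le_of_lt hρpos) hx2
    have hWρ : |Wv| ≤ ρ := abs_le_of_sq_le' (le_of_lt hρpos) hw2
    have hEρ : |E| ≤ ρ := abs_le_of_sq_le' (le_of_lt hρpos) he2
    have hGX : |G1*X| ≤ |G1| *ρ := by
      rw [abs_mul]; exact mul_le_mul_of_nonneg_left hXρ (abs_nonneg G1)
    have hDt : D t - G1*(s t - sbar) = Db + Wv - G1*X := by rw [hWvdef, hXdef]; ring
    have hsatlo' : Dmin ≤ D t - G1*(s t - sbar) := by
      rw [hDt]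
      have h1 := neg_abs_le Wv
      have h2 := le_abs_self (G1*X)
      linarith [hρsat, hdsat1]
    have hsathi' : D t - G1*(s t - sbar) ≤ Dmax := by
      rw [hDt]
      have h1 := le_abs_self Wv
      have h2 := neg_abs_le (G1*X)
      linarith [hρsat, hdsat2]
    have hsat : sat Dmin Dmax (D t - G1*(s t - sbar)) = D t - G1*(s t - sbar) :=
      sat_eq_self hsatlo' hsathi'
    obtain ⟨r, hrdef⟩ : ∃ z, z = μ (s t) - Db - m*X := ⟨_, rfl⟩
    have hrb : |r| ≤ ε₀* |X| := by
      have harg : |s t - sbar| ≤ ρ₁ := by rw [← hXdef]; exact le_trans hXρ hρρ₁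
      have h0 := hmvt (s t) harg
      rw [hrdef, hXdef]
      exact h0
    have hDbpos : 0 < Db := by rw [hDb]; exact lt_trans hDmin hlow
    have hμbd : |μ (s t)| ≤ Mμ :=
      mu_bound_aux Db m ε₀ ρ X r (μ (s t)) Mμ (by rw [hrdef]; ring) hMμ hDbpos hXρ hρ1
        hrb hε₀1 hε₀pos
    obtain ⟨R1, hR1def⟩ : ∃ z, z = -(X*Wv) + a*X^2 - (β - X)*r - μ (s t)*E := ⟨_, rfl⟩
    obtain ⟨R2, hR2def⟩ : ∃ z, z = -G2*X*((Dmax + Dmin - 2*Db)*Wv - Wv^2) := ⟨_, rfl⟩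
    have hsdval : sd t = β*Wv - α*X + R1 := by
      rw [hsd t, hsat, hR1def, hrdef, hα, ha, hm, hXdef, hWvdef, hEdef, hβ, hDb]
      ring
    have hDdval : Dd t = -γ*X + R2 := by
      rw [hDd t, hR2def, hγ, hXdef, hWvdef, hDb]
      ring
    have hsum : sd t + bd t = -(D t - G1*(s t - sbar))*E := by
      rw [hsd t, hbd t, hsat, hEdef]; ring
    have hWdt : Wd t = (-2*P*X^2 + 2*η*α*(X*Wv) - 2*Q*Wv^2) + ((2*γ*X - 2*η*Wv)*R1 +
        (2*β*Wv - 2*η*X)*R2) + 2*M*(E*(-(D t - G1*(s t - sbar))*E)) := by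
      rw [hWddef t, hsum, hsdval, hDdval, hP, hQ, hXdef, hWvdef, hEdef]
      ring
    have habsR1 : |R1| ≤ (1+a)*ρ*(|X| + |Wv|) + (β+1)*(ε₀* |X|) + Mμ* |E| := by
      rw [hR1def]
      exact R1_bound_aux a β ε₀ Mμ ρ X Wv E r (μ (s t)) hapos hβpos hXρ hWρ hρ1 hρpos
        hrb hε₀pos hμbd
    have habsR2 : |R2| ≤ K2*ρ* |X| := by
      rw [hR2def, hK2]
      exact R2_bound_aux G2 (Dmax + Dmin - 2*Db) ρ X Wv hG2 hXρ hWρ hρ1 hρpos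
    have hdC6 : 2*ν*C6 = (γ+η)*Mμ := by rw [hC6]; field_simp
    have hcross := combine_aux γ β η a ε₀ Mμ ν ρ K2 C6 X Wv E R1 R2 hγpos hβpos hηpos
      hapos hνpos hρpos hε₀pos hMμpos hK2pos (le_of_lt hC6pos) hdC6 habsR1 habsR2
    have hcoef : ρ*(4*(γ+η)*(1+a) + 3*(β+η)*K2) + ε₀*(3*(γ+η)*(β+1)) + ν*(4*(γ+η)*Mμ)
        = ρ*C3 + ε₀*C4 + ν*C5 := by rw [hC3, hC4, hC5]
    rw [hcoef] at hcross
    have hquadb := hquad X Wv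
    have hB := Bterm_aux M (D t - G1*(s t - sbar)) Dmin E hMpos hsatlo'
    have hTnn : (0:ℝ) ≤ X^2 + Wv^2 := by positivity
    have h4 := mul_le_mul_of_nonneg_right hρC3 hTnn
    have h5 := mul_le_mul_of_nonneg_right hε₀C4 hTnn
    have h6 := mul_le_mul_of_nonneg_right hνC5 hTnn
    have h7 := mul_le_mul_of_nonneg_right hC6M (sq_nonneg E)
    have hubW : W t ≤ (3*γ/2)*X^2 + (3*β/2)*Wv^2 + M*E^2 := by
      rw [hXdef, hWvdef, hEdef]; exact hWub t
    have h8 := final_aux lam0 lam1 γ β M Dmin X Wv E (W t) hlam1γ hlam1β hlam1D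
      hlam1pos hMpos hubW
    rw [hWdt]
    linarith
  -- initial condition bound
  have hnorm : ∀ t, ‖((s t, b t, D t) : ℝ × ℝ × ℝ) - (sbar, s_in - sbar, μ sbar)‖ =
      max |s t - sbar| (max |b t - (s_in - sbar)| |D t - Db|) := by
    intro t
    rw [hDb, Prod.mk_sub_mk, Prod.mk_sub_mk, Prod.norm_def, Prod.norm_def]
    simp [Real.norm_eq_abs]
  obtain ⟨N0, hN0def⟩ : ∃ x, x = ‖((s 0, b 0, D 0) : ℝ × ℝ × ℝ) - (sbar, s_in - sbar, μ sbar)‖ :=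
    ⟨_, rfl⟩
  have hN0nonneg : 0 ≤ N0 := hN0def ▸ norm_nonneg _
  have hN0δ : N0 < δ := hN0def ▸ hinit
  have hcomp0 : |s 0 - sbar| ≤ N0 ∧ |b 0 - (s_in - sbar)| ≤ N0 ∧ |D 0 - Db| ≤ N0 := by
    rw [hN0def, hnorm 0]
    exact ⟨le_max_left _ _, le_trans (le_max_left _ _) (le_max_right _ _),
      le_trans (le_max_right _ _) (le_max_right _ _)⟩
  have hW0ub : W 0 ≤ c₂*N0^2 := by
    obtain ⟨ha1, ha2, ha3⟩ := hcomp0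
    have e1 : (s 0 - sbar)^2 ≤ N0^2 := sq_le_of_abs_le' ha1
    have e2 : (D 0 - Db)^2 ≤ N0^2 := sq_le_of_abs_le' ha3
    have e3 : (s 0 + b 0 - s_in)^2 ≤ 4*N0^2 := by
      have h4 : |s 0 + b 0 - s_in| ≤ 2*N0 := by
        have h5 := abs_add_le (s 0 - sbar) (b 0 - (s_in - sbar))
        have heq : s 0 + b 0 - s_in = (s 0 - sbar) + (b 0 - (s_in - sbar)) := by ring
        rw [heq]; linarith
      have h6 := sq_le_of_abs_le' h4
      have h7 : (2*N0)^2 = 4*N0^2 := by ring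
      linarith
    calc W 0 ≤ (3*γ/2)*(s 0 - sbar)^2 + (3*β/2)*(D 0 - Db)^2 + M*(s 0 + b 0 - s_in)^2 := hWub 0
    _ ≤ (3*γ/2 + 3*β/2 + 4*M)*N0^2 := W0_aux γ β M _ _ _ _ hγpos hβpos hMpos e1 e2 e3
    _ = c₂*N0^2 := by rw [hc₂]
  have hW0 : W 0 < c₁*ρ^2 := by
    have hN2 : N0^2 < δ^2 := sq_lt_sq_aux' hN0nonneg hN0δ
    have h2 : c₂*N0^2 < c₂*δ^2 := (mul_lt_mul_iff_right₀ hc₂pos).mpr hN2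
    calc W 0 ≤ c₂*N0^2 := hW0ub
    _ < c₂*δ^2 := h2
    _ = c₁*ρ^2 := hδ2
  -- continuity of W on [0,∞)
  have hWcont : ContinuousOn W (Set.Ici (0:ℝ)) :=
    fun t ht => ((hW t ht).continuousAt).continuousWithinAt
  -- invariance of the sublevel set
  have hinv : ∀ t, 0 ≤ t → W t < c₁*ρ^2 := by
    by_contra hcon
    push_neg at hcon
    obtain ⟨t₁, ht₁, hWt₁⟩ := hcon
    have hAclosed : IsClosed (Set.Ici (0:ℝ) ∩ W ⁻¹' Set.Ici (c₁*ρ^2)) :=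
      hWcont.preimage_isClosed_of_isClosed isClosed_Ici isClosed_Ici
    have hAne : (Set.Ici (0:ℝ) ∩ W ⁻¹' Set.Ici (c₁*ρ^2)).Nonempty := ⟨t₁, ht₁, hWt₁⟩
    have hAbdd : BddBelow (Set.Ici (0:ℝ) ∩ W ⁻¹' Set.Ici (c₁*ρ^2)) :=
      ⟨0, fun y hy => hy.1⟩
    obtain ⟨ht₀0, hWt₀⟩ := hAclosed.csInf_mem hAne hAbdd
    set t₀ := sInf (Set.Ici (0:ℝ) ∩ W ⁻¹' Set.Ici (c₁*ρ^2)) with ht₀def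
    have ht₀pos : 0 < t₀ := by
      rcases lt_or_eq_of_le (Set.mem_Ici.mp ht₀0) with h | h
      · exact h
      · exfalso; rw [← h] at hWt₀; exact absurd hWt₀ (not_le.mpr hW0)
    have hbefore : ∀ τ, 0 ≤ τ → τ < t₀ → W τ < c₁*ρ^2 := by
      intro τ h1 h2
      by_contra hc
      push_neg at hc
      exact absurd (csInf_le hAbdd ⟨h1, hc⟩) (not_le.mpr h2)
    -- the function W(τ)·exp(lam1 τ) is antitone on [0,t₀]
    have hganti : AntitoneOn (fun τ => W τ * Real.exp (lam1 * τ)) (Set.Icc 0 t₀) := by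
      apply antitoneOn_of_deriv_nonpos (convex_Icc _ _)
      · exact ((hWcont.mono (Set.Icc_subset_Ici_self)).mul
          ((Real.continuous_exp.comp (continuous_const.mul continuous_id)).continuousOn))
      · intro τ hτ
        rw [interior_Icc] at hτ
        have hdg : HasDerivAt (fun τ => W τ * Real.exp (lam1 * τ))
            (Wd τ * Real.exp (lam1 * τ) + W τ * (Real.exp (lam1 * τ) * lam1)) τ := by
          have he : HasDerivAt (fun τ => Real.exp (lam1 * τ)) (Real.exp (lam1 * τ) * lam1) τ := by
            have := ((hasDerivAt_id τ).const_mul lam1).exp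
            simpa using this
          exact (hW τ (le_of_lt hτ.1)).mul he
        exact hdg.differentiableAt.differentiableWithinAt
      · intro τ hτ
        rw [interior_Icc] at hτ
        have he : HasDerivAt (fun τ => Real.exp (lam1 * τ)) (Real.exp (lam1 * τ) * lam1) τ := by
          have := ((hasDerivAt_id τ).const_mul lam1).exp
          simpa using this
        have hdg := (hW τ (le_of_lt hτ.1)).mul he
        rw [HasDerivAt.deriv (f := fun τ => W τ * Real.exp (lam1 * τ)) hdg]
        have hkτ := hkey τ (le_of_lt hτ.1) (le_of_lt (hbefore τ (le_of_lt hτ.1) hτ.2))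
        exact deriv_nonpos_aux _ _ _ _ (Real.exp_pos _) hkτ
    have hg0 : W t₀ * Real.exp (lam1 * t₀) ≤ W 0 := by
      have := hganti (Set.left_mem_Icc.mpr (le_of_lt ht₀pos))
        ⟨le_of_lt ht₀pos, le_refl t₀⟩ (le_of_lt ht₀pos)
      simpa using this
    have hexp1 : (1:ℝ) ≤ Real.exp (lam1 * t₀) := by
      rw [show (1:ℝ) = Real.exp 0 by simp]
      apply Real.exp_le_exp.mpr; positivity
    exact inv_contra_aux _ _ _ _ (hWnonneg t₀) hexp1 hg0 hWt₀ hW0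
  -- exponential decay of W
  have hg : ∀ T, 0 ≤ T → W T * Real.exp (lam1 * T) ≤ W 0 := by
    intro T hT
    rcases eq_or_lt_of_le hT with h | h
    · rw [← h]; simp
    have hganti : AntitoneOn (fun τ => W τ * Real.exp (lam1 * τ)) (Set.Icc 0 T) := by
      apply antitoneOn_of_deriv_nonpos (convex_Icc _ _)
      · exact ((hWcont.mono (Set.Icc_subset_Ici_self)).mul
          ((Real.continuous_exp.comp (continuous_const.mul continuous_id)).continuousOn))
      · intro τ hτ
        rw [interior_Icc] at hτ
        have he : HasDerivAt (fun τ => Real.exp (lam1 * τ)) (Real.exp (lam1 * τ) * lam1) τ := by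
          have := ((hasDerivAt_id τ).const_mul lam1).exp
          simpa using this
        exact ((hW τ (le_of_lt hτ.1)).mul he).differentiableAt.differentiableWithinAt
      · intro τ hτ
        rw [interior_Icc] at hτ
        have he : HasDerivAt (fun τ => Real.exp (lam1 * τ)) (Real.exp (lam1 * τ) * lam1) τ := by
          have := ((hasDerivAt_id τ).const_mul lam1).exp
          simpa using this
        have hdg := (hW τ (le_of_lt hτ.1)).mul he
        rw [HasDerivAt.deriv (f := fun τ => W τ * Real.exp (lam1 * τ)) hdg]
        have hkτ := hkey τ (le_of_lt hτ.1) (le_of_lt (hinv τ (le_of_lt hτ.1)))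
        exact deriv_nonpos_aux _ _ _ _ (Real.exp_pos _) hkτ
    have := hganti (Set.left_mem_Icc.mpr (le_of_lt h)) ⟨le_of_lt h, le_refl T⟩ (le_of_lt h)
    simpa using this
  have hdecay : ∀ t, 0 ≤ t → W t ≤ c₂*N0^2 * Real.exp (-(lam1 * t)) := by
    intro t ht
    have h1 := hg t ht
    rw [Real.exp_neg, ← div_eq_mul_inv, le_div_iff₀ (Real.exp_pos _)]
    calc W t * Real.exp (lam1 * t) ≤ W 0 := h1
    _ ≤ c₂*N0^2 := hW0ub
  -- main exponential bound
  have hmain : ∀ t, 0 ≤ t → ‖((s t, b t, D t) : ℝ × ℝ × ℝ) - (sbar, s_in - sbar, μ sbar)‖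
      ≤ C * Real.exp (-lam * t) * N0 := by
    intro t ht
    obtain ⟨R, hRdef⟩ : ∃ x, x = Real.sqrt (c₂/c₁) * Real.exp (-lam * t) * N0 := ⟨_, rfl⟩
    have hRnonneg : 0 ≤ R := by rw [hRdef]; positivity
    have hR2 : c₁ * R^2 = c₂ * N0^2 * Real.exp (-(lam1 * t)) := by
      rw [hRdef]
      rw [mul_pow, mul_pow, sq_sqrt (by positivity : (0:ℝ) ≤ c₂/c₁)]
      rw [← Real.exp_nat_mul]
      have : Real.exp ((2:ℕ) * (-lam * t)) = Real.exp (-(lam1 * t)) := by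
        congr 1
        rw [hlamdef]; push_cast; ring
      rw [this]
      field_simp
    have hub : W t ≤ c₁*R^2 := by rw [hR2]; exact hdecay t ht
    obtain ⟨hx2, hw2, he2⟩ := comp_bound_aux c₁ γ β M _ _ _ (W t) (R^2) hc₁pos hc₁γ hc₁β hc₁M
      (sq_nonneg _) (sq_nonneg _) (sq_nonneg _) (hWlb t) hub
    have hxa : |s t - sbar| ≤ R := abs_le_of_sq_le' hRnonneg hx2
    have hwa : |D t - Db| ≤ R := abs_le_of_sq_le' hRnonneg hw2
    have hea : |s t + b t - s_in| ≤ R := abs_le_of_sq_le' hRnonneg he2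
    have hya : |b t - (s_in - sbar)| ≤ 2*R := by
      have heq : b t - (s_in - sbar) = (s t + b t - s_in) - (s t - sbar) := by ring
      rw [heq]
      calc |(s t + b t - s_in) - (s t - sbar)| ≤ |s t + b t - s_in| + |s t - sbar| := abs_sub _ _
      _ ≤ 2*R := by linarith
    have hCR : C * Real.exp (-lam * t) * N0 = 2*R := by
      rw [hCdef, hRdef]; ring
    rw [hnorm t, hCR]
    exact max_le (by linarith) (max_le hya (by linarith))
  refine ⟨fun t ht => hN0def ▸ hmain t ht, ?_⟩
  -- convergence of D
  have htend0 : Tendsto (fun t => C * N0 * Real.exp (-lam * t)) atTop (nhds 0) := by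
    have h1 : Tendsto (fun t : ℝ => lam * t) atTop atTop :=
      Tendsto.const_mul_atTop hlampos tendsto_id
    have h2 : Tendsto (fun t : ℝ => Real.exp (-(lam * t))) atTop (nhds 0) :=
      Real.tendsto_exp_neg_atTop_nhds_zero.comp h1
    have h3 := h2.const_mul (C * N0)
    rw [mul_zero] at h3
    convert h3 using 2 with t
    rw [neg_mul]
  have hDtend : Tendsto (fun t => D t - Db) atTop (nhds 0) := by
    apply squeeze_zero_norm' (a := fun t => C * N0 * Real.exp (-lam * t)) _ htend0
    filter_upwards [eventually_ge_atTop (0:ℝ)] with t ht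
    have h1 := hmain t ht
    rw [hnorm t] at h1
    have h2 : |D t - Db| ≤ C * Real.exp (-lam * t) * N0 :=
      le_trans (le_trans (le_max_right _ _) (le_max_right _ _)) h1
    rw [Real.norm_eq_abs]
    calc |D t - Db| ≤ C * Real.exp (-lam * t) * N0 := h2
    _ = C * N0 * Real.exp (-lam * t) := by ring
  have := hDtend.add_const Db
  rw [zero_add] at this
  rw [← hDb]
  convert this using 2 with t
  ring
end

section
/- Let a, d, b, g be positive real numbers. Then the real 3×3 matrix J = [[−a−d, −d, b], [a, 0, −b], [−g, 0, 0]] is Hurwitz: every (complex) eigenvalue of J has negative real part. Equivalently, every complex root of the polynomial λ³ + (a+d)·λ² + (a·d + b·g)·λ + d·b·g has negative real part. (This matrix is the Jacobian of the extended closed-loop chemostat at the equilibrium (s̄, s_in−s̄, μ(s̄)), with a = (G1 + μ'(s̄))·(s_in − s̄), d = μ(s̄), b = s_in − s̄, g = G2·(μ(s̄) − D_min)·(D_max − μ(s̄)).) -/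
lemma cubic_root_neg (p q r x y : ℝ) (hp : 0 < p) (hq : 0 < q) (hr : 0 < r)
    (hpq : r < p * q)
    (hre : x ^ 3 - 3 * x * y ^ 2 + p * (x ^ 2 - y ^ 2) + q * x + r = 0)
    (him : y * (3 * x ^ 2 - y ^ 2 + 2 * p * x + q) = 0) : x < 0 := by
  by_contra h
  push_neg at h
  rcases mul_eq_zero.mp him with hy | hy
  · subst hy
    nlinarith [mul_nonneg (mul_nonneg h h) h, mul_nonneg hp.le (mul_nonneg h h),
      mul_nonneg hq.le h]
  · nlinarith [mul_nonneg (mul_nonneg h h) h, mul_nonneg hp.le (mul_nonneg h h),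
      mul_nonneg (mul_nonneg hp.le hp.le) h, mul_nonneg hq.le h]

/-- The Jacobian of the extended closed-loop chemostat at its equilibrium is
Hurwitz: all complex eigenvalues of `[[-a-d, -d, b], [a, 0, -b], [-g, 0, 0]]`
(with `a, d, b, g > 0`) have negative real part; equivalently all roots of
`λ³ + (a+d)λ² + (ad + bg)λ + dbg` have negative real part. -/
theorem stmt_11
    (a d b g : ℝ) (ha : 0 < a) (hd : 0 < d) (hb : 0 < b) (hg : 0 < g) :
    (∀ z ∈ spectrum ℂ
        ((!![-a - d, -d, b; a, 0, -b; -g, 0, 0] :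
            Matrix (Fin 3) (Fin 3) ℝ).map (Complex.ofReal ·)),
      z.re < 0) ∧
    (∀ z : ℂ,
      z ^ 3 + ((a : ℂ) + d) * z ^ 2 + ((a : ℂ) * d + b * g) * z
          + (d : ℂ) * b * g = 0 →
      z.re < 0) := by
  have key : ∀ z : ℂ,
      z ^ 3 + ((a : ℂ) + d) * z ^ 2 + ((a : ℂ) * d + b * g) * z
          + (d : ℂ) * b * g = 0 → z.re < 0 := by
    intro z hz
    set p : ℝ := a + d with hpd
    set q : ℝ := a * d + b * g with hqd
    set r : ℝ := d * b * g with hrd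
    have hp : 0 < p := by positivity
    have hq : 0 < q := by positivity
    have hr : 0 < r := by positivity
    have hpq : r < p * q := by
      have : p * q = a * a * d + a * b * g + a * d * d + d * b * g := by ring
      nlinarith [mul_pos (mul_pos ha ha) hd, mul_pos (mul_pos ha hb) hg,
        mul_pos (mul_pos ha hd) hd]
    set x := z.re
    set y := z.im
    have h1 := congrArg Complex.re hz
    have h2 := congrArg Complex.im hz
    simp only [Complex.add_re, Complex.add_im, Complex.mul_re, Complex.mul_im,
      Complex.ofReal_re, Complex.ofReal_im, Complex.zero_re, Complex.zero_im,
      pow_succ, pow_zero, one_mul, Complex.one_re, Complex.one_im] at h1 h2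
    apply cubic_root_neg p q r x y hp hq hr hpq
    · linear_combination h1
    · linear_combination h2
  refine ⟨?_, key⟩
  intro z hz
  apply key
  rw [spectrum.mem_iff] at hz
  rw [Matrix.isUnit_iff_isUnit_det] at hz
  have hdet : ((algebraMap ℂ (Matrix (Fin 3) (Fin 3) ℂ)) z -
      (!![-a - d, -d, b; a, 0, -b; -g, 0, 0] :
        Matrix (Fin 3) (Fin 3) ℝ).map (Complex.ofReal ·)).det = 0 := by
    by_contra h
    exact hz (isUnit_iff_ne_zero.mpr h)
  rw [← hdet]
  rw [Matrix.algebraMap_eq_diagonal]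
  simp [Matrix.det_fin_three, Matrix.map_apply, Matrix.diagonal,
    Matrix.of_apply, Matrix.cons_val_zero, Matrix.cons_val_one,
    Matrix.vecHead, Matrix.vecTail]
  ring
end
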